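/- arXiv:1602.04922 — 4 statements merged into one kernel-verified Lean document; each statement's English description precedes it below -/
import Mathlib

section
/- The sum over all k of the exterior angles of the convex polygon equals 2π; that is, Σ_{k=0}^{n−1} angle(v_{k+1} − v_k, v_k − v_{k−1}) = 2π, where angle denotes the unsigned angle between the two vectors. -/
noncomputable section

namespace BNC

/-- The Euclidean plane. -/
abbrev Pt : Type := EuclideanSpace ℝ (Fin 2)

/-- Planar cross product (determinant) of two vectors. -/
def cross (u w : Pt) : ℝ := u 0 * w 1 - u 1 * w 0

/-- `v` lists points in strictly convex position in counterclockwise order: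
every point distinct from `v i` and `v (i+1)` lies strictly to the left of the
directed line from `v i` to `v (i+1)`.  (This also forces no three of the
points to be collinear.) -/
def ConvexCCW {n : ℕ} (v : ZMod n → Pt) : Prop :=
  ∀ i j : ZMod n, j ≠ i → j ≠ i + 1 → 0 < cross (v (i + 1) - v i) (v j - v i)

/-- The cyclic arc of indices `i, i+1, …, j` (mod `n`). -/
def arc {n : ℕ} (i j : ZMod n) : Finset (ZMod n) :=
  Finset.image (fun t : ℕ => i + (t : ZMod n)) (Finset.range ((j - i).val + 1))

/-- The turning angle `τ(i,j)`: the sum over `k ∈ ⟨i+1..j−1⟩` of the unsigned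
angle between `v (k+1) − v k` and `v k − v (k−1)`. -/
def tau {n : ℕ} (v : ZMod n → Pt) (i j : ZMod n) : ℝ :=
  ∑ k ∈ arc (i + 1) (j - 1),
    InnerProductGeometry.angle (v (k + 1) - v k) (v k - v (k - 1))

/-- The length of the segment joining the two points of an unordered pair. -/
def pairDist {n : ℕ} (v : ZMod n → Pt) : Sym2 (ZMod n) → ℝ :=
  Sym2.lift ⟨fun a b => dist (v a) (v b), fun a b => dist_comm (v a) (v b)⟩

/-- The closed segment joining the two points of an unordered pair. -/
def pairSeg {n : ℕ} (v : ZMod n → Pt) : Sym2 (ZMod n) → Set Pt :=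
  Sym2.lift ⟨fun a b => segment ℝ (v a) (v b), fun a b => segment_symm ℝ (v a) (v b)⟩

/-- `M` is a perfect matching of the index set `A`: a set of non-degenerate
unordered pairs of indices from `A` such that every index of `A` belongs to
exactly one pair. -/
def IsMatchingOn {n : ℕ} (A : Set (ZMod n)) (M : Set (Sym2 (ZMod n))) : Prop :=
  (∀ e ∈ M, ¬ e.IsDiag) ∧ (∀ e ∈ M, ∀ k, k ∈ e → k ∈ A) ∧
    (∀ k ∈ A, ∃! e, e ∈ M ∧ k ∈ e)

/-- The closed segments of distinct pairs of `M` are pairwise disjoint. -/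
def NonCrossing {n : ℕ} (v : ZMod n → Pt) (M : Set (Sym2 (ZMod n))) : Prop :=
  ∀ e ∈ M, ∀ e' ∈ M, e ≠ e' → Disjoint (pairSeg v e) (pairSeg v e')

/-- The bottleneck value of a matching: the maximal segment length. -/
def bnM {n : ℕ} (v : ZMod n → Pt) (M : Set (Sym2 (ZMod n))) : ℝ :=
  sSup (pairDist v '' M)

/-- A non-crossing perfect matching of the whole point set. -/
def IsNCMatching {n : ℕ} (v : ZMod n → Pt) (M : Set (Sym2 (ZMod n))) : Prop :=
  IsMatchingOn Set.univ M ∧ NonCrossing v M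

/-- A bottleneck matching: a non-crossing matching minimizing the bottleneck value. -/
def IsBottleneck {n : ℕ} (v : ZMod n → Pt) (M : Set (Sym2 (ZMod n))) : Prop :=
  IsNCMatching v M ∧ ∀ M', IsNCMatching v M' → bnM v M ≤ bnM v M'

/-- A pair is an edge of the full polygon iff it is of the form `{k, k+1}`. -/
def IsPolyEdge {n : ℕ} (e : Sym2 (ZMod n)) : Prop := ∃ k : ZMod n, e = s(k, k + 1)

/-- The diagonals of a matching of the full point set. -/
def fullDiags {n : ℕ} (M : Set (Sym2 (ZMod n))) : Set (Sym2 (ZMod n)) :=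
  {e ∈ M | ¬ IsPolyEdge e}

/-- The full polygon: the convex hull of all the points. -/
def fullPoly {n : ℕ} (v : ZMod n → Pt) : Set Pt := convexHull ℝ (Set.range v)

/-- The interior of the polygon `Poly` minus the union of the segments of the
diagonals from `D`. -/
def regionSpace {n : ℕ} (v : ZMod n → Pt) (Poly : Set Pt) (D : Set (Sym2 (ZMod n))) :
    Set Pt :=
  interior Poly \ ⋃ e ∈ D, pairSeg v e

/-- `R` is a region: the closure of a connected component of the interior of the
polygon minus the union of the diagonal segments. -/
def IsRegion {n : ℕ} (v : ZMod n → Pt) (Poly : Set Pt) (D : Set (Sym2 (ZMod n)))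
    (R : Set Pt) : Prop :=
  ∃ x ∈ regionSpace v Poly D, R = closure (connectedComponentIn (regionSpace v Poly D) x)

/-- The diagonals from `D` whose segment lies on the boundary of `R`. -/
def boundDiags {n : ℕ} (v : ZMod n → Pt) (Poly : Set Pt) (D : Set (Sym2 (ZMod n)))
    (R : Set Pt) : Set (Sym2 (ZMod n)) :=
  {e ∈ D | pairSeg v e ⊆ frontier R}

/-- `R` is a region bounded by exactly `k` diagonals. -/
def KBounded {n : ℕ} (v : ZMod n → Pt) (Poly : Set Pt) (D : Set (Sym2 (ZMod n)))
    (R : Set Pt) (k : ℕ) : Prop :=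
  IsRegion v Poly D R ∧ (boundDiags v Poly D R).ncard = k

/-- The graph whose vertices are the diagonals of `D`, two being adjacent iff
some 2-bounded region has both on its boundary. -/
def cascadeGraph {n : ℕ} (v : ZMod n → Pt) (Poly : Set Pt) (D : Set (Sym2 (ZMod n))) :
    SimpleGraph D where
  Adj a b := a ≠ b ∧ ∃ R : Set Pt, KBounded v Poly D R 2 ∧
      pairSeg v a.1 ⊆ frontier R ∧ pairSeg v b.1 ⊆ frontier R
  symm := by
    constructor
    rintro a b ⟨hab, R, h1, h2, h3⟩
    exact ⟨hab.symm, R, h1, h3, h2⟩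
  loopless := by constructor; rintro a ⟨h, -⟩; exact h rfl

/-- The number of cascades: the number of connected components of the cascade graph. -/
def cascadeCount {n : ℕ} (v : ZMod n → Pt) (Poly : Set Pt) (D : Set (Sym2 (ZMod n))) : ℕ :=
  Nat.card (cascadeGraph v Poly D).ConnectedComponent

/-- A pair is a diagonal relative to the arc `⟨i..j⟩` iff it is neither `{i,j}`
nor of the form `{k, k+1}` with both `k` and `k+1` in the arc. -/
def ArcDiag {n : ℕ} (i j : ZMod n) (e : Sym2 (ZMod n)) : Prop :=
  e ≠ s(i, j) ∧ ∀ k : ZMod n, k ∈ arc i j → k + 1 ∈ arc i j → e ≠ s(k, k + 1)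

/-- The convex hull of the points of the arc `⟨i..j⟩`. -/
def arcPoly {n : ℕ} (v : ZMod n → Pt) (i j : ZMod n) : Set Pt :=
  convexHull ℝ (v '' (arc i j : Set (ZMod n)))

/-- The diagonals (relative to the arc `⟨i..j⟩`) of a matching `M`. -/
def arcDiags {n : ℕ} (i j : ZMod n) (M : Set (Sym2 (ZMod n))) : Set (Sym2 (ZMod n)) :=
  {e ∈ M | ArcDiag i j e}

/-- `M` is admissible for the subproblem `Matching(i,j)`: it is a non-crossing
perfect matching of the points of the arc `⟨i..j⟩`, it has at most one cascade,
and any region whose boundary contains the segment `[v i, v j]` has at most one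
diagonal of `M` on its boundary. -/
def Admissible {n : ℕ} (v : ZMod n → Pt) (i j : ZMod n) (M : Set (Sym2 (ZMod n))) : Prop :=
  IsMatchingOn (↑(arc i j)) M ∧ NonCrossing v M ∧
    cascadeCount v (arcPoly v i j) (arcDiags i j M) ≤ 1 ∧
    ∀ R : Set Pt, IsRegion v (arcPoly v i j) (arcDiags i j M) R →
      segment ℝ (v i) (v j) ⊆ frontier R →
      (boundDiags v (arcPoly v i j) (arcDiags i j M) R).ncard ≤ 1

/-- `S i j`: the optimal value of the subproblem `Matching(i,j)`. -/
def S {n : ℕ} (v : ZMod n → Pt) (i j : ZMod n) : ℝ :=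
  sInf (bnM v '' {M | Admissible v i j M})

/-- The pair `(i,j)` is necessary: every admissible matching attaining `S i j`
contains the pair `{i,j}`. -/
def Necessary {n : ℕ} (v : ZMod n → Pt) (i j : ZMod n) : Prop :=
  ∀ M : Set (Sym2 (ZMod n)), Admissible v i j M → bnM v M = S v i j → s(i, j) ∈ M

/-- The closed right side of the directed line from `v i` to `v j`. -/
def rightClosed {n : ℕ} (v : ZMod n → Pt) (i j : ZMod n) : Set Pt :=
  {P : Pt | cross (v j - v i) (P - v i) ≤ 0}

/-- The region `Π⁺(i,j)`. -/
def PiPlus {n : ℕ} (v : ZMod n → Pt) (i j : ZMod n) : Set Pt :=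
  {P ∈ rightClosed v i j |
    Real.pi / 3 ≤ EuclideanGeometry.angle (v i) P (v j) ∧ dist (v i) (v j) ≤ dist P (v i)}

/-- The region `Π⁻(i,j)`. -/
def PiMinus {n : ℕ} (v : ZMod n → Pt) (i j : ZMod n) : Set Pt :=
  {P ∈ rightClosed v i j |
    Real.pi / 3 ≤ EuclideanGeometry.angle (v i) P (v j) ∧ dist (v i) (v j) ≤ dist P (v j)}

/-- `(i,j)` is a feasible pair: the arc `⟨i..j⟩` has an even number of points. -/
def Feasible {n : ℕ} (i j : ZMod n) : Prop := Even (arc i j).card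

/-- `(i,j)` is a diagonal pair (not an edge, not degenerate). -/
def IsDiagPair {n : ℕ} (i j : ZMod n) : Prop := i ≠ j ∧ j ≠ i + 1 ∧ i ≠ j + 1

/-- `(i,j)` is a candidate diagonal: a feasible diagonal that is necessary and
whose turning angle is at most `2π/3`. -/
def Candidate {n : ℕ} (v : ZMod n → Pt) (i j : ZMod n) : Prop :=
  Feasible i j ∧ IsDiagPair i j ∧ Necessary v i j ∧ tau v i j ≤ 2 * Real.pi / 3

end BNC

namespace BNCAux
open BNC Complex

def Z (u : Pt) : ℂ := ⟨u 0, u 1⟩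

@[simp] lemma Z_re (u : Pt) : (Z u).re = u 0 := rfl
@[simp] lemma Z_im (u : Pt) : (Z u).im = u 1 := rfl

lemma cross_eq (u w : Pt) : cross u w = ((starRingEnd ℂ) (Z u) * Z w).im := by
  simp [cross, Complex.mul_im]; ring

lemma inner_eq (u w : Pt) : (inner ℝ u w : ℝ) = ((starRingEnd ℂ) (Z u) * Z w).re := by
  rw [PiLp.inner_apply]
  simp [Fin.sum_univ_two, Complex.mul_re, RCLike.inner_apply]
  ring

lemma norm_eq' (u : Pt) : ‖u‖ = ‖Z u‖ := by
  rw [EuclideanSpace.norm_eq, Complex.norm_def, Complex.normSq_apply]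
  congr 1
  simp [Fin.sum_univ_two, sq_abs]
  ring

lemma Zu_ne_zero {u w : Pt} (h : 0 < cross u w) : Z u ≠ 0 := by
  intro h0; rw [cross_eq, h0] at h; simp at h

lemma Zw_ne_zero {u w : Pt} (h : 0 < cross u w) : Z w ≠ 0 := by
  intro h0; rw [cross_eq, h0] at h; simp at h

lemma angle_eq_arg (u w : Pt) (h : 0 < cross u w) :
    InnerProductGeometry.angle u w = ((starRingEnd ℂ) (Z u) * Z w).arg := by
  have him : 0 < ((starRingEnd ℂ) (Z u) * Z w).im := by rw [← cross_eq]; exact h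
  rw [InnerProductGeometry.angle, inner_eq, norm_eq', norm_eq',
    Complex.arg_of_im_pos him]
  congr 1
  rw [norm_mul, Complex.norm_conj]

lemma angle_pos (u w : Pt) (h : 0 < cross u w) : 0 < InnerProductGeometry.angle u w := by
  rw [angle_eq_arg u w h]
  have him : 0 < ((starRingEnd ℂ) (Z u) * Z w).im := by rw [← cross_eq]; exact h
  rcases lt_or_eq_of_le (Complex.arg_nonneg_iff.2 him.le) with h' | h'
  · exact h'
  · exfalso
    have := (Complex.arg_eq_zero_iff.1 h'.symm).2
    rw [this] at him; exact lt_irrefl 0 him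

lemma angle_lt_pi (u w : Pt) (h : 0 < cross u w) : InnerProductGeometry.angle u w < Real.pi := by
  rw [angle_eq_arg u w h]
  have him : 0 < ((starRingEnd ℂ) (Z u) * Z w).im := by rw [← cross_eq]; exact h
  rcases lt_or_eq_of_le (Complex.arg_le_pi _) with h' | h'
  · exact h'
  · exfalso
    have := (Complex.arg_eq_pi_iff.1 h').2
    rw [this] at him; exact lt_irrefl 0 him

lemma conj_mul_eq (u w : Pt) (h : 0 < cross u w) :
    (starRingEnd ℂ) (Z u) * Z w =
      ((‖Z u‖ * ‖Z w‖ : ℝ) : ℂ) *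
        Complex.exp ((InnerProductGeometry.angle u w : ℝ) * I) := by
  rw [angle_eq_arg u w h]
  have habs : ‖Z u‖ * ‖Z w‖
      = ‖(starRingEnd ℂ) (Z u) * Z w‖ := by
    rw [norm_mul, Complex.norm_conj]
  rw [habs]
  exact (Complex.norm_mul_exp_arg_mul_I _).symm

lemma im_real_mul_exp (r x : ℝ) : (((r : ℝ) : ℂ) * Complex.exp (x * I)).im = r * Real.sin x := by
  rw [Complex.exp_mul_I]
  simp [Complex.mul_im, Complex.cos_ofReal_re, Complex.sin_ofReal_im, Complex.sin_ofReal_re]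

end BNCAux

section Main
open BNC BNCAux Complex

variable {n : ℕ} [NeZero n] (v : ZMod n → Pt)

def E (k : ZMod n) : Pt := v (k + 1) - v k

def Th (k : ZMod n) : ℝ :=
  InnerProductGeometry.angle (v (k + 1) - v k) (v k - v (k - 1))

def T (m : ℕ) : ℝ := ∑ t ∈ Finset.range m, Th v (((t + 1 : ℕ) : ZMod n))

lemma cross_shift (a b c : Pt) : cross (b - a) (c - a) = cross (b - a) (c - b) := by
  simp [cross, PiLp.sub_apply]; ring

lemma cross_anti (u w : Pt) : cross u w = - cross w u := by
  simp [cross]; ring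

lemma plucker (p q u x : Pt) :
    cross u x * cross p q = cross u q * cross p x - cross u p * cross q x := by
  simp [cross]; ring

lemma bnc_two_ne_zero (hn : 3 ≤ n) : (2 : ZMod n) ≠ 0 := by
  intro h
  have h2 : ((2 : ℕ) : ZMod n) = 0 := by exact_mod_cast h
  have := ZMod.val_natCast_of_lt (show 2 < n by omega)
  rw [h2] at this
  simp at this

lemma bnc_one_ne_zero (hn : 3 ≤ n) : (1 : ZMod n) ≠ 0 := by
  intro h
  have h2 : ((1 : ℕ) : ZMod n) = 0 := by exact_mod_cast h
  have := ZMod.val_natCast_of_lt (show 1 < n by omega)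
  rw [h2] at this
  simp at this

lemma cross_e_succ (hn : 3 ≤ n) (hv : ConvexCCW v) (k : ZMod n) :
    0 < cross (E v k) (E v (k + 1)) := by
  have h1 : k + 2 ≠ k := by
    intro h
    exact bnc_two_ne_zero hn (by linear_combination h)
  have h2 : k + 2 ≠ k + 1 := by
    intro h
    exact bnc_one_ne_zero hn (by linear_combination h)
  have h := hv k (k + 2) h1 h2
  have hE : E v (k + 1) = v (k + 2) - v (k + 1) := by
    show v (k + 1 + 1) - v (k + 1) = _
    rw [show k + 1 + 1 = k + 2 by ring]
  rw [E, hE, ← cross_shift (v k) (v (k + 1)) (v (k + 2))]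
  exact h

lemma no_cone (hn : 3 ≤ n) (hv : ConvexCCW v) (A B : ZMod n)
    (hBA : B ≠ A) (hBA1 : B ≠ A + 1)
    (h1 : 0 ≤ cross (E v A) (E v B)) (h2 : 0 < cross (E v B) (E v (A + 1))) : False := by
  by_cases hB2 : B = A + 2
  · subst hB2
    have h3 := cross_e_succ v hn hv (A + 1)
    have h4 : A + 1 + 1 = A + 2 := by ring
    rw [h4] at h3
    rw [cross_anti] at h2
    linarith
  · have c1 : 0 < cross (E v A) (v B - v A) := hv A B hBA hBA1
    have c2 : 0 < cross (E v (A + 1)) (v B - v (A + 1)) := by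
      have h := hv (A + 1) B hBA1 (by rwa [show A + 1 + 1 = A + 2 by ring])
      rwa [show v (A + 1 + 1) - v (A + 1) = E v (A + 1) from rfl] at h
    have c3 : 0 < cross (E v B) (v (A + 1) - v B) := by
      have h := hv B (A + 1) (fun h => hBA1 h.symm)
        (fun h => hBA (add_right_cancel h).symm)
      rwa [show v (B + 1) - v B = E v B from rfl] at h
    have cC : 0 < cross (E v A) (E v (A + 1)) := cross_e_succ v hn hv A
    have c1' : 0 < cross (E v A) (v B - v (A + 1)) := by
      have h := cross_shift (v A) (v (A + 1)) (v B)
      rw [show v (A + 1) - v A = E v A from rfl] at h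
      rw [← h]; exact c1
    have hp := plucker (E v A) (E v (A + 1)) (E v B) (v B - v (A + 1))
    have hanti := cross_anti (E v A) (E v B)
    have hux : 0 < cross (E v B) (v B - v (A + 1)) := by
      nlinarith [mul_pos h2 c1', mul_nonneg (by linarith : (0:ℝ) ≤ - cross (E v B) (E v A)) c2.le]
    have hflip : cross (E v B) (v (A + 1) - v B) = - cross (E v B) (v B - v (A + 1)) := by
      simp [cross, PiLp.sub_apply]; ring
    rw [hflip] at c3
    linarith

lemma E_exp (hn : 3 ≤ n) (hv : ConvexCCW v) (k : ZMod n) :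
    (starRingEnd ℂ) (Z (E v k)) * Z (E v (k + 1)) =
      ((‖Z (E v k)‖ * ‖Z (E v (k + 1))‖ : ℝ) : ℂ) *
        Complex.exp ((Th v (k + 1) : ℝ) * Complex.I) := by
  have hc := cross_e_succ v hn hv k
  have hTh : Th v (k + 1) = InnerProductGeometry.angle (E v k) (E v (k + 1)) := by
    rw [Th, InnerProductGeometry.angle_comm, show k + 1 - 1 = k by ring]
    rfl
  rw [hTh]
  exact conj_mul_eq _ _ hc

lemma th_eq_angle (k : ZMod n) :
    Th v k = InnerProductGeometry.angle (E v (k - 1)) (E v k) := by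
  have hE : E v (k - 1) = v k - v (k - 1) := by
    show v (k - 1 + 1) - v (k - 1) = _
    rw [show k - 1 + 1 = k by ring]
  rw [Th, InnerProductGeometry.angle_comm, hE]
  rfl

lemma cross_pred (hn : 3 ≤ n) (hv : ConvexCCW v) (k : ZMod n) :
    0 < cross (E v (k - 1)) (E v k) := by
  have hc := cross_e_succ v hn hv (k - 1)
  rwa [show k - 1 + 1 = k by ring] at hc

lemma th_pos (hn : 3 ≤ n) (hv : ConvexCCW v) (k : ZMod n) : 0 < Th v k := by
  rw [th_eq_angle]
  exact angle_pos _ _ (cross_pred v hn hv k)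

lemma th_lt_pi (hn : 3 ≤ n) (hv : ConvexCCW v) (k : ZMod n) : Th v k < Real.pi := by
  rw [th_eq_angle]
  exact angle_lt_pi _ _ (cross_pred v hn hv k)

lemma Z_E_ne_zero (hn : 3 ≤ n) (hv : ConvexCCW v) (k : ZMod n) : Z (E v k) ≠ 0 :=
  Zu_ne_zero (cross_e_succ v hn hv k)

lemma T_zero : T v 0 = 0 := by simp [T]

lemma T_succ (m : ℕ) : T v (m + 1) = T v m + Th v (((m + 1 : ℕ) : ZMod n)) := by
  rw [T, Finset.sum_range_succ]; rfl

lemma T_nonneg (hn : 3 ≤ n) (hv : ConvexCCW v) (m : ℕ) : 0 ≤ T v m :=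
  Finset.sum_nonneg fun t _ => (th_pos v hn hv _).le

lemma inv_exp (hn : 3 ≤ n) (hv : ConvexCCW v) (m : ℕ) :
    (starRingEnd ℂ) (Z (E v 0)) * Z (E v (m : ZMod n)) =
      ((‖Z (E v 0)‖ * ‖Z (E v (m : ZMod n))‖ : ℝ) : ℂ) *
        Complex.exp ((T v m : ℝ) * Complex.I) := by
  induction m with
  | zero =>
    rw [Nat.cast_zero, T_zero, Complex.ofReal_zero, zero_mul, Complex.exp_zero, mul_one,
      mul_comm, Complex.mul_conj, Complex.normSq_eq_norm_sq]
    push_cast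
    ring
  | succ m ih =>
    have hcast : (((m + 1 : ℕ)) : ZMod n) = (m : ZMod n) + 1 := by push_cast; ring
    have e2 := E_exp v hn hv (m : ZMod n)
    have hzm : Z (E v (m : ZMod n)) ≠ 0 := Z_E_ne_zero v hn hv _
    have habs : (‖Z (E v (m : ZMod n))‖ : ℂ) ≠ 0 := by
      simpa using hzm
    apply mul_right_cancel₀ (pow_ne_zero 2 habs)
    have hsq : Z (E v (m : ZMod n)) * (starRingEnd ℂ) (Z (E v (m : ZMod n)))
        = ((‖Z (E v (m : ZMod n))‖ : ℂ)) ^ 2 := by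
      rw [Complex.mul_conj, ← Complex.sq_norm]
      push_cast; ring
    calc (starRingEnd ℂ) (Z (E v 0)) * Z (E v ((m + 1 : ℕ) : ZMod n)) *
          (‖Z (E v (m : ZMod n))‖ : ℂ) ^ 2
        = ((starRingEnd ℂ) (Z (E v 0)) * Z (E v (m : ZMod n))) *
          ((starRingEnd ℂ) (Z (E v (m : ZMod n))) * Z (E v ((m : ZMod n) + 1))) := by
          rw [hcast, ← hsq]; ring
      _ = (((‖Z (E v 0)‖ * ‖Z (E v (m : ZMod n))‖ : ℝ) : ℂ) *
            Complex.exp ((T v m : ℝ) * Complex.I)) *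
          (((‖Z (E v (m : ZMod n))‖ *
              ‖Z (E v ((m : ZMod n) + 1))‖ : ℝ) : ℂ) *
            Complex.exp ((Th v ((m : ZMod n) + 1) : ℝ) * Complex.I)) := by
          rw [ih, e2]
      _ = ((‖Z (E v 0)‖ * ‖Z (E v ((m + 1 : ℕ) : ZMod n))‖ : ℝ) : ℂ) *
            Complex.exp ((T v (m + 1) : ℝ) * Complex.I) *
          (‖Z (E v (m : ZMod n))‖ : ℂ) ^ 2 := by
          rw [T_succ, hcast]
          rw [show ((T v m + Th v ((m : ZMod n) + 1) : ℝ) : ℂ) * Complex.I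
              = ((T v m : ℝ) : ℂ) * Complex.I + ((Th v ((m : ZMod n) + 1) : ℝ) : ℂ) * Complex.I by
            push_cast; ring]
          rw [Complex.exp_add]
          push_cast
          ring
end Main

section Main2
open BNC BNCAux Complex

variable {n : ℕ} [NeZero n] (v : ZMod n → Pt)

lemma inv_exp2 (hn : 3 ≤ n) (hv : ConvexCCW v) (a b : ℕ) :
    (starRingEnd ℂ) (Z (E v (a : ZMod n))) * Z (E v (b : ZMod n)) =
      ((‖Z (E v (a : ZMod n))‖ * ‖Z (E v (b : ZMod n))‖ : ℝ) : ℂ) *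
        Complex.exp ((T v b - T v a : ℝ) * Complex.I) := by
  have ea := inv_exp v hn hv a
  have eb := inv_exp v hn hv b
  have hz0 : Z (E v 0) ≠ 0 := Z_E_ne_zero v hn hv 0
  have habs : (‖Z (E v 0)‖ : ℂ) ≠ 0 := by simpa using hz0
  apply mul_right_cancel₀ (pow_ne_zero 2 habs)
  have hsq : Z (E v 0) * (starRingEnd ℂ) (Z (E v 0))
      = ((‖Z (E v 0)‖ : ℂ)) ^ 2 := by
    rw [Complex.mul_conj, ← Complex.sq_norm]; push_cast; ring
  have key : (starRingEnd ℂ) (Z (E v (a : ZMod n))) * Z (E v (b : ZMod n)) *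
      (‖Z (E v 0)‖ : ℂ) ^ 2
      = (starRingEnd ℂ) ((starRingEnd ℂ) (Z (E v 0)) * Z (E v (a : ZMod n))) *
        ((starRingEnd ℂ) (Z (E v 0)) * Z (E v (b : ZMod n))) := by
    rw [map_mul, Complex.conj_conj, ← hsq]
    ring
  rw [key, ea, eb, map_mul]
  rw [show (starRingEnd ℂ) (Complex.exp (((T v a : ℝ) : ℂ) * Complex.I))
      = Complex.exp (-(((T v a : ℝ) : ℂ) * Complex.I)) by
    rw [← Complex.exp_conj]; congr 1; simp]
  rw [Complex.conj_ofReal]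
  rw [show ((T v b - T v a : ℝ) : ℂ) * Complex.I
      = ((T v b : ℝ) : ℂ) * Complex.I + -(((T v a : ℝ) : ℂ) * Complex.I) by push_cast; ring]
  rw [Complex.exp_add]
  push_cast
  ring

lemma cross_sin (hn : 3 ≤ n) (hv : ConvexCCW v) (a b : ℕ) :
    cross (E v (a : ZMod n)) (E v (b : ZMod n)) =
      (‖Z (E v (a : ZMod n))‖ * ‖Z (E v (b : ZMod n))‖) *
        Real.sin (T v b - T v a) := by
  rw [cross_eq, inv_exp2 v hn hv a b, im_real_mul_exp]

lemma natCast_injOn {a b : ℕ} (ha : a < n) (hb : b < n) (h : (a : ZMod n) = (b : ZMod n)) :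
    a = b := by
  have := congrArg ZMod.val h
  rwa [ZMod.val_natCast_of_lt ha, ZMod.val_natCast_of_lt hb] at this

lemma T_lt (hn : 3 ≤ n) (hv : ConvexCCW v) (m : ℕ) (hm : m ≤ n - 1) :
    T v m < 2 * Real.pi := by
  classical
  by_contra hcon
  push_neg at hcon
  have hex : ∃ t, 2 * Real.pi ≤ T v t ∧ t ≤ n - 1 := ⟨m, hcon, hm⟩
  set b := Nat.find hex with hbdef
  have hspec := Nat.find_spec hex
  rw [← hbdef] at hspec
  obtain ⟨hTb, hble⟩ := hspec
  have hmin : ∀ t, t < b → T v t < 2 * Real.pi := by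
    intro t ht
    rw [hbdef] at ht
    have h2 := Nat.find_min hex ht
    by_contra h'
    push_neg at h'
    exact h2 ⟨h', by omega⟩
  have hpi := Real.pi_pos
  have hb2 : 2 ≤ b := by
    by_contra hb
    push_neg at hb
    have hT1 : T v 1 = Th v ((1 : ℕ) : ZMod n) := by
      rw [show (1 : ℕ) = 0 + 1 from rfl, T_succ, T_zero]; ring_nf
    have hlt := th_lt_pi v hn hv (((1:ℕ) : ZMod n))
    rcases (by omega : b = 0 ∨ b = 1) with h | h <;> rw [h] at hTb
    · rw [T_zero] at hTb; linarith
    · rw [hT1] at hTb; linarith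
  set b1 := b - 1 with hb1def
  have hbb : b = b1 + 1 := by omega
  have hTb1lt : T v b1 < 2 * Real.pi := hmin b1 (by omega)
  have hTsucc : T v b = T v b1 + Th v (((b1 + 1 : ℕ)) : ZMod n) := by
    rw [hbb, T_succ]
  have hthb_lt := th_lt_pi v hn hv (((b1 + 1 : ℕ)) : ZMod n)
  have hthb_pos := th_pos v hn hv (((b1 + 1 : ℕ)) : ZMod n)
  have hTb1gt : Real.pi < T v b1 := by linarith
  have hTb3 : T v b < 3 * Real.pi := by linarith
  -- findGreatest
  set a := Nat.findGreatest (fun t => T v t ≤ T v b - 2 * Real.pi) b1 with hadef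
  have haP : T v a ≤ T v b - 2 * Real.pi := by
    rw [hadef]
    exact Nat.findGreatest_spec (P := fun t => T v t ≤ T v b - 2 * Real.pi)
      (Nat.zero_le b1) (show T v 0 ≤ T v b - 2 * Real.pi by rw [T_zero]; linarith)
  have hale : a ≤ b1 := Nat.findGreatest_le b1
  have hane : a ≠ b1 := by
    intro h
    rw [h] at haP
    linarith
  have halt : a + 1 ≤ b1 := by omega
  have ha1 : T v b - 2 * Real.pi < T v (a + 1) := by
    have h := Nat.findGreatest_is_greatest (P := fun t => T v t ≤ T v b - 2 * Real.pi)
      (show a < a + 1 by omega) halt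
    exact not_le.mp h
  have hTa1 : T v (a + 1) = T v a + Th v (((a + 1 : ℕ)) : ZMod n) := T_succ v a
  have htha_lt := th_lt_pi v hn hv (((a + 1 : ℕ)) : ZMod n)
  have htha_pos := th_pos v hn hv (((a + 1 : ℕ)) : ZMod n)
  have hTa0 : 0 ≤ T v a := T_nonneg v hn hv a
  -- cross signs
  have habpos : ∀ k : ZMod n, 0 < ‖Z (E v k)‖ := fun k =>
    norm_pos_iff.mpr (Z_E_ne_zero v hn hv k)
  have hca : 0 ≤ cross (E v (a : ZMod n)) (E v (b : ZMod n)) := by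
    rw [cross_sin v hn hv a b]
    apply mul_nonneg (mul_nonneg (habpos _).le (habpos _).le)
    have h1 : 0 ≤ T v b - T v a - 2 * Real.pi := by linarith
    have h2 : T v b - T v a - 2 * Real.pi ≤ Real.pi := by linarith
    have := Real.sin_nonneg_of_nonneg_of_le_pi h1 h2
    rwa [show T v b - T v a - 2 * Real.pi = (T v b - T v a) - 2 * Real.pi by ring,
      Real.sin_sub_two_pi] at this
  have hcb : 0 < cross (E v (b : ZMod n)) (E v ((a + 1 : ℕ) : ZMod n)) := by
    rw [cross_sin v hn hv b (a + 1)]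
    apply mul_pos (mul_pos (habpos _) (habpos _))
    have h1 : 0 < T v (a + 1) - T v b + 2 * Real.pi := by linarith
    have h2 : T v (a + 1) - T v b + 2 * Real.pi < Real.pi := by linarith
    have := Real.sin_pos_of_pos_of_lt_pi h1 h2
    rwa [Real.sin_add_two_pi] at this
  -- apply no_cone
  have hcast : ((a + 1 : ℕ) : ZMod n) = (a : ZMod n) + 1 := by push_cast; ring
  have hb_lt_n : b < n := by omega
  have ha_lt_n : a < n := by omega
  have ha1_lt_n : a + 1 < n := by omega
  apply no_cone v hn hv (a : ZMod n) (b : ZMod n)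
  · intro h
    have := natCast_injOn (n := n) hb_lt_n ha_lt_n h
    omega
  · rw [← hcast]
    intro h
    have := natCast_injOn (n := n) hb_lt_n ha1_lt_n h
    omega
  · exact hca
  · rw [← hcast]
    exact hcb
end Main2

section Main3
open BNC BNCAux Complex

variable {n : ℕ} [NeZero n] (v : ZMod n → Pt)

lemma sum_zmod (f : ZMod n → ℝ) :
    ∑ k : ZMod n, f k = ∑ m ∈ Finset.range n, f (m : ZMod n) := by
  refine Finset.sum_bij' (fun (k : ZMod n) _ => k.val) (fun (m : ℕ) _ => (m : ZMod n))
    (fun k _ => Finset.mem_range.mpr (ZMod.val_lt k)) (fun m _ => Finset.mem_univ _)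
    (fun k _ => ZMod.natCast_rightInverse k) (fun m hm => ZMod.val_natCast_of_lt (Finset.mem_range.mp hm))
    (fun k _ => by rw [ZMod.natCast_rightInverse k])

theorem exterior_sum (hn : 3 ≤ n) (hv : ConvexCCW v) :
    ∑ k : ZMod n, Th v k = 2 * Real.pi := by
  have hpi := Real.pi_pos
  have hn1 : n - 1 + 1 = n := by omega
  -- sum decomposition
  have hsum : ∑ k : ZMod n, Th v k = T v (n - 1) + Th v (0 : ZMod n) := by
    have hs := Finset.sum_range_succ' (fun m => Th v ((m : ℕ) : ZMod n)) (n - 1)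
    rw [hn1] at hs
    rw [sum_zmod (Th v), hs, Nat.cast_zero]
    rfl
  -- the wrap-around edge
  have hcast : ((n - 1 : ℕ) : ZMod n) = -1 := by
    have h : ((n - 1 : ℕ) : ZMod n) = ((n : ℕ) : ZMod n) - 1 := by
      push_cast [Nat.cast_sub (show 1 ≤ n by omega)]
      ring
    rw [h, ZMod.natCast_self]
    ring
  have e1 := inv_exp v hn hv (n - 1)
  have e2 := E_exp v hn hv (((n - 1 : ℕ)) : ZMod n)
  have hm1 : ((n - 1 : ℕ) : ZMod n) + 1 = 0 := by rw [hcast]; ring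
  rw [hm1] at e2
  -- multiply
  set z0 := Z (E v (0 : ZMod n)) with hz0def
  set zl := Z (E v (((n - 1 : ℕ)) : ZMod n)) with hzldef
  have hz0 : z0 ≠ 0 := Z_E_ne_zero v hn hv 0
  have hzl : zl ≠ 0 := Z_E_ne_zero v hn hv _
  have habs : ((‖z0‖ * ‖zl‖ : ℝ) : ℂ) ^ 2 ≠ 0 := by
    apply pow_ne_zero
    rw [Complex.ofReal_ne_zero]
    exact (mul_pos (norm_pos_iff.mpr hz0) (norm_pos_iff.mpr hzl)).ne'
  have hprod : ((‖z0‖ * ‖zl‖ : ℝ) : ℂ) ^ 2 *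
      Complex.exp (((T v (n - 1) + Th v (0 : ZMod n) : ℝ) : ℂ) * Complex.I)
      = ((‖z0‖ * ‖zl‖ : ℝ) : ℂ) ^ 2 := by
    have lhs_eq : ((starRingEnd ℂ) z0 * zl) * ((starRingEnd ℂ) zl * z0)
        = ((‖z0‖ * ‖zl‖ : ℝ) : ℂ) ^ 2 := by
      have h1 : z0 * (starRingEnd ℂ) z0 = ((‖z0‖ : ℂ)) ^ 2 := by
        rw [Complex.mul_conj, ← Complex.sq_norm]; push_cast; ring
      have h2 : zl * (starRingEnd ℂ) zl = ((‖zl‖ : ℂ)) ^ 2 := by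
        rw [Complex.mul_conj, ← Complex.sq_norm]; push_cast; ring
      calc ((starRingEnd ℂ) z0 * zl) * ((starRingEnd ℂ) zl * z0)
          = (z0 * (starRingEnd ℂ) z0) * (zl * (starRingEnd ℂ) zl) := by ring
        _ = ((‖z0‖ : ℂ)) ^ 2 * ((‖zl‖ : ℂ)) ^ 2 := by rw [h1, h2]
        _ = ((‖z0‖ * ‖zl‖ : ℝ) : ℂ) ^ 2 := by push_cast; ring
    have rhs_eq : ((starRingEnd ℂ) z0 * zl) * ((starRingEnd ℂ) zl * z0)
        = ((‖z0‖ * ‖zl‖ : ℝ) : ℂ) ^ 2 *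
          Complex.exp (((T v (n - 1) + Th v (0 : ZMod n) : ℝ) : ℂ) * Complex.I) := by
      rw [e1, e2]
      rw [show ((T v (n - 1) + Th v (0 : ZMod n) : ℝ) : ℂ) * Complex.I
          = ((T v (n - 1) : ℝ) : ℂ) * Complex.I + ((Th v (0 : ZMod n) : ℝ) : ℂ) * Complex.I by
        push_cast; ring]
      rw [Complex.exp_add]
      push_cast
      ring
    rw [← rhs_eq, lhs_eq]
  have hexp1 : Complex.exp (((T v (n - 1) + Th v (0 : ZMod n) : ℝ) : ℂ) * Complex.I) = 1 := by
    apply mul_left_cancel₀ habs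
    rw [hprod, mul_one]
  obtain ⟨K, hK⟩ := Complex.exp_eq_one_iff.mp hexp1
  have hKr : T v (n - 1) + Th v (0 : ZMod n) = K * (2 * Real.pi) := by
    have h2 : ((T v (n - 1) + Th v (0 : ZMod n) : ℝ) : ℂ) = (K : ℂ) * (2 * (Real.pi : ℂ)) := by
      apply mul_right_cancel₀ Complex.I_ne_zero
      rw [hK]; ring
    exact_mod_cast h2
  -- bounds
  have hb1 : T v (n - 1) < 2 * Real.pi := T_lt v hn hv (n - 1) le_rfl
  have hb2 : 0 ≤ T v (n - 1) := T_nonneg v hn hv (n - 1)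
  have hb3 : 0 < Th v (0 : ZMod n) := th_pos v hn hv _
  have hb4 : Th v (0 : ZMod n) < Real.pi := th_lt_pi v hn hv _
  have hK1 : K = 1 := by
    have hKpos : (0 : ℝ) < K * (2 * Real.pi) := by rw [← hKr]; linarith
    have hKlt : K * (2 * Real.pi) < 3 * Real.pi := by rw [← hKr]; linarith
    have h1 : 0 < K := by
      by_contra h
      push_neg at h
      have h' : (K : ℝ) ≤ 0 := by exact_mod_cast h
      nlinarith
    have h2 : K < 2 := by
      by_contra h
      push_neg at h
      have h' : (2 : ℝ) ≤ (K : ℝ) := by exact_mod_cast h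
      nlinarith
    omega
  rw [hsum, hKr, hK1]
  push_cast
  ring
end Main3

/-- The sum of the exterior angles of a convex polygon equals `2π`. -/
theorem stmt2 (n : ℕ) [NeZero n] (hn : 3 ≤ n)
    (v : ZMod n → BNC.Pt) (hv : BNC.ConvexCCW v) :
    ∑ k : ZMod n, InnerProductGeometry.angle (v (k + 1) - v k) (v k - v (k - 1)) =
      2 * Real.pi := by
  exact exterior_sum v hn hv
end
end

section
/- No non-crossing matching of the points has exactly two cascades. -/
noncomputable section

namespace BNC2
open BNC Set

lemma pt_sub_apply (x y : Pt) (i : Fin 2) : (x - y) i = x i - y i := rfl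
lemma pt_add_apply (x y : Pt) (i : Fin 2) : (x + y) i = x i + y i := rfl
lemma pt_smul_apply (t : ℝ) (x : Pt) (i : Fin 2) : (t • x) i = t * x i := rfl

lemma cross_self (u : Pt) : cross u u = 0 := by simp [cross, mul_comm]

lemma cross_zero_right (w : Pt) : cross w 0 = 0 := by
  simp [cross, show (0:Pt) 0 = 0 from rfl, show (0:Pt) 1 = 0 from rfl]

lemma cross_add_right (w x y : Pt) : cross w (x + y) = cross w x + cross w y := by
  simp [cross, pt_add_apply]; ring

lemma cross_sub_right (w x y : Pt) : cross w (x - y) = cross w x - cross w y := by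
  simp [cross, pt_sub_apply]; ring

lemma cross_smul_right (w : Pt) (t : ℝ) (x : Pt) : cross w (t • x) = t * cross w x := by
  simp [cross, pt_smul_apply]; ring

lemma cross_add_left (w u x : Pt) : cross (w + u) x = cross w x + cross u x := by
  simp [cross, pt_add_apply]; ring

lemma continuous_cross (w : Pt) : Continuous (cross w) := by
  have h0 : Continuous (fun P : Pt => P 0) := by fun_prop
  have h1 : Continuous (fun P : Pt => P 1) := by fun_prop
  exact ((continuous_const.mul h1).sub (continuous_const.mul h0))

/-- decomposition in a 2D basis via cross products -/
lemma cross_decomp {u w : Pt} (h : cross u w ≠ 0) (z : Pt) :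
    (cross z w / cross u w) • u + (cross u z / cross u w) • w = z := by
  have key : cross u w • z = cross z w • u + cross u z • w := by
    ext i
    fin_cases i <;>
      simp [cross, pt_add_apply, pt_smul_apply] <;> ring
  have := congrArg (fun y => (cross u w)⁻¹ • y) key.symm
  simpa [smul_smul, inv_mul_cancel₀ h, div_eq_inv_mul, mul_comm] using this

/-- if `cross w z = 0` and `w ≠ 0` then `z` is a multiple of `w` -/
lemma cross_collinear {w z : Pt} (h : cross w z = 0) (hw : w ≠ 0) : ∃ t : ℝ, z = t • w := by
  have hco : w 0 ≠ 0 ∨ w 1 ≠ 0 := by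
    by_contra hc
    push_neg at hc
    apply hw
    ext i; fin_cases i <;> simp [hc.1, hc.2]
  rcases hco with h0 | h1
  · refine ⟨z 0 / w 0, ?_⟩
    ext i
    fin_cases i <;> simp [pt_smul_apply]
    · field_simp
    · have : w 0 * z 1 = w 1 * z 0 := by simp [cross] at h; linarith
      field_simp
      linarith [this]
  · refine ⟨z 1 / w 1, ?_⟩
    ext i
    fin_cases i <;> simp [pt_smul_apply]
    · have : w 0 * z 1 = w 1 * z 0 := by simp [cross] at h; linarith
      field_simp
      linarith [this]
    · field_simp

end BNC2
namespace BNC2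
open BNC Set

variable {n : ℕ}

/-- the line functional of the directed line from `v a` to `v b` -/
def lf (v : ZMod n → Pt) (a b : ZMod n) (P : Pt) : ℝ := cross (v b - v a) (P - v a)

lemma continuous_lf (v : ZMod n → Pt) (a b : ZMod n) : Continuous (lf v a b) := by
  unfold lf
  exact (continuous_cross _).comp (continuous_id.sub continuous_const)

lemma lf_affine (v : ZMod n → Pt) (a b : ZMod n) {t s : ℝ} (hts : t + s = 1) (x y : Pt) :
    lf v a b (t • x + s • y) = t * lf v a b x + s * lf v a b y := by
  unfold lf
  have h2 : t • (x - v a) + s • (y - v a) = t • x + s • y - (t + s) • v a := by module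
  rw [hts, one_smul] at h2
  rw [← h2, cross_add_right, cross_smul_right, cross_smul_right]

lemma lf_self_left (v : ZMod n → Pt) (a b : ZMod n) : lf v a b (v a) = 0 := by
  simp [lf, sub_self, cross_zero_right]

lemma lf_self_right (v : ZMod n → Pt) (a b : ZMod n) : lf v a b (v b) = 0 := by
  simp [lf, cross_self]

section convexgeom

variable {v : ZMod n → Pt}

lemma hv_lf (hv : ConvexCCW v) {i j : ZMod n} (h1 : j ≠ i) (h2 : j ≠ i + 1) :
    0 < lf v i (i + 1) (v j) := hv i j h1 h2

lemma one_ne_zero' [NeZero n] (hn : 4 ≤ n) : (1 : ZMod n) ≠ 0 := by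
  intro h
  have : (n : ℕ) ∣ 1 := by
    have := (ZMod.natCast_eq_zero_iff 1 n).1 (by simpa using h)
    simpa using this
  have := Nat.le_of_dvd one_pos this
  omega

lemma two_ne_zero' [NeZero n] (hn : 4 ≤ n) : (2 : ZMod n) ≠ 0 := by
  intro h
  have : (n : ℕ) ∣ 2 := by
    have := (ZMod.natCast_eq_zero_iff 2 n).1 (by simpa using h)
    simpa using this
  have := Nat.le_of_dvd (by norm_num) this
  omega

variable [NeZero n]

lemma vinj (hn : 4 ≤ n) (hv : ConvexCCW v) : Function.Injective v := by
  intro a b hab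
  by_contra hne
  rcases eq_or_ne b (a + 1) with rfl | hb1
  · have := hv (a + 1) a (by
      intro h; exact (one_ne_zero' hn) (by linear_combination -h)) (by
      intro h
      exact (two_ne_zero' hn) (by linear_combination -h))
    rw [show v a - v (a+1) = 0 by rw [hab]; abel] at this
    simp [cross, cross_zero_right] at this
  · have := hv a b (fun h => hne h.symm) hb1
    rw [show v b - v a = 0 by rw [hab]; abel] at this
    simp [cross, cross_zero_right] at this

/-- vertex values of edge functionals are nonnegative -/
lemma edge_nonneg (hv : ConvexCCW v) (i k : ZMod n) : 0 ≤ lf v i (i + 1) (v k) := by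
  rcases eq_or_ne k i with rfl | h1
  · rw [lf_self_left]
  rcases eq_or_ne k (i + 1) with rfl | h2
  · rw [lf_self_right]
  exact (hv i k h1 h2).le

/-- upper bounds on vertices give bounds on the polygon, for linear functionals
given by `cross w ·` -/
lemma poly_le (w : Pt) (c : ℝ) (h : ∀ k, cross w (v k) ≤ c) :
    ∀ x ∈ fullPoly v, cross w x ≤ c := by
  intro x hx
  have hconv : Convex ℝ {P : Pt | cross w P ≤ c} := by
    intro p hp q hq a b ha hb hab
    have : cross w (a • p + b • q) = a * cross w p + b * cross w q := by
      rw [cross_add_right, cross_smul_right, cross_smul_right]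
    simp only [mem_setOf_eq] at hp hq ⊢
    rw [this]
    calc a * cross w p + b * cross w q ≤ a * c + b * c := by
          apply add_le_add <;> apply mul_le_mul_of_nonneg_left ‹_› ‹_›
      _ = c := by rw [← add_mul, hab, one_mul]
  refine convexHull_min ?_ hconv hx
  rintro - ⟨k, rfl⟩
  exact h k

/-- the two-edge support functional at the vertex `j` -/
def psi (v : ZMod n → Pt) (j : ZMod n) (P : Pt) : ℝ :=
  lf v j (j + 1) P + lf v (j - 1) j P

lemma psi_affine {t s : ℝ} (hts : t + s = 1) (j : ZMod n) (x y : Pt) :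
    psi v j (t • x + s • y) = t * psi v j x + s * psi v j y := by
  unfold psi
  rw [lf_affine v _ _ hts, lf_affine v _ _ hts]; ring

lemma psi_self (j : ZMod n) : psi v j (v j) = 0 := by
  have : (j - 1) + 1 = j := by ring
  simp [psi, lf_self_left, lf, this, cross_self, cross_zero_right, sub_self]

lemma psi_pos (hn : 4 ≤ n) (hv : ConvexCCW v) {j k : ZMod n} (hk : k ≠ j) :
    0 < psi v j (v k) := by
  have h1 : 0 ≤ lf v j (j + 1) (v k) := edge_nonneg hv j k
  have h2 : 0 ≤ lf v (j - 1) (j - 1 + 1) (v k) := edge_nonneg hv (j - 1) k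
  have hj1 : (j : ZMod n) - 1 + 1 = j := by ring
  rw [hj1] at h2
  rcases eq_or_ne k (j + 1) with rfl | hk1
  · have : 0 < lf v (j - 1) (j - 1 + 1) (v (j + 1)) := by
      refine hv (j - 1) (j + 1) ?_ ?_
      · intro h; exact two_ne_zero' hn (by linear_combination h)
      · rw [hj1]; intro h; exact one_ne_zero' hn (by linear_combination h)
    rw [hj1] at this
    unfold psi; linarith
  rcases eq_or_ne k (j - 1) with rfl | hk2
  · have : 0 < lf v j (j + 1) (v (j - 1)) := by
      refine hv j (j - 1) ?_ ?_
      · intro h; exact one_ne_zero' hn (by linear_combination -h)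
      · intro h; exact two_ne_zero' hn (by linear_combination -h)
    unfold psi; linarith
  · have g1 : 0 < lf v j (j + 1) (v k) := hv j k hk hk1
    have g2 : 0 < lf v (j - 1) (j - 1 + 1) (v k) := by
      refine hv (j - 1) k ?_ ?_
      · intro h; apply hk2; rw [h]
      · rw [hj1]; exact hk
    rw [hj1] at g2
    unfold psi; linarith

lemma psi_nonneg_poly (hn : 4 ≤ n) (hv : ConvexCCW v) (j : ZMod n) :
    ∀ x ∈ fullPoly v, 0 ≤ psi v j x := by
  intro x hx
  -- rewrite psi as cross of a sum minus a constant
  set w1 := v (j + 1) - v j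
  set w2 := v j - v (j - 1)
  have hrw : ∀ P, psi v j P = cross (w1 + w2) P - (cross w1 (v j) + cross w2 (v (j - 1))) := by
    intro P
    simp only [psi, lf, cross_sub_right, cross_add_left, w1, w2]
    ring
  have key : ∀ y ∈ fullPoly v, cross (-(w1 + w2)) y ≤ -(cross w1 (v j) + cross w2 (v (j - 1))) := by
    apply poly_le
    intro k
    have h1 : 0 ≤ psi v j (v k) := by
      rcases eq_or_ne k j with rfl | h
      · rw [psi_self]
      · exact (psi_pos hn hv h).le
    rw [hrw (v k)] at h1
    have hneg : cross (-(w1 + w2)) (v k) = -cross (w1 + w2) (v k) := by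
      have := cross_add_left (w1 + w2) (-(w1 + w2)) (v k)
      simp only [add_neg_cancel] at this
      have h0 : cross (0 : Pt) (v k) = 0 := by simp [cross]
      linarith [this, h0]
    linarith [hneg]
  have := key x hx
  have hneg : cross (-(w1 + w2)) x = -cross (w1 + w2) x := by
    have h2 := cross_add_left (w1 + w2) (-(w1 + w2)) x
    simp only [add_neg_cancel] at h2
    have h0 : cross (0 : Pt) x = 0 := by simp [cross]
    linarith
  rw [hrw x]
  linarith

end convexgeom

end BNC2
namespace BNC2
open BNC Set

variable {n : ℕ} [NeZero n] {v : ZMod n → Pt}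

/-- the polygon is contained in closed halfplanes whose vertex values are bounded;
points of the polygon on the line through two distinct vertices lie on the segment -/
lemma line_inter_poly (hn : 4 ≤ n) (hv : ConvexCCW v) {a b : ZMod n} (hab : a ≠ b)
    {x : Pt} (hx : x ∈ fullPoly v) (hlf : lf v a b x = 0) :
    x ∈ segment ℝ (v a) (v b) := by
  have hw : v b - v a ≠ 0 := sub_ne_zero.2 fun h => hab (vinj hn hv h.symm)
  obtain ⟨t, ht⟩ := cross_collinear hlf hw
  have hxeq : x = v a + t • (v b - v a) := by
    have : x - v a = t • (v b - v a) := ht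
    rw [← this]; abel
  rcases le_or_gt t 0 with ht0 | ht0
  · rcases eq_or_lt_of_le ht0 with rfl | htneg
    · rw [segment_eq_image' ℝ]
      exact ⟨0, by constructor <;> norm_num, by rw [hxeq]⟩
    · exfalso
      -- v a is a strict convex combination of v b and x; use psi a
      set s : ℝ := 1 / (1 - t) with hs
      have hs0 : 0 < s := by rw [hs]; apply div_pos one_pos; linarith
      have hs1 : s < 1 := by
        rw [hs, div_lt_one (by linarith)]
        linarith
      have hcomb : (1 - s) • v b + s • x = v a := by
        rw [hxeq]
        have h1t : (1 - t) * s = 1 := by rw [hs, mul_one_div, div_self (by linarith : (1:ℝ) - t ≠ 0)]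
        have expand : (1 - s) • v b + s • (v a + t • (v b - v a))
            = ((1 - s) + s * t) • v b + (s - s * t) • v a := by module
        rw [expand]
        have e1 : (1 - s) + s * t = 0 := by
          have : s * (1 - t) = 1 := by linarith [h1t, mul_comm (1 - t) s]
          nlinarith
        have e2 : s - s * t = 1 := by nlinarith [h1t, mul_comm (1 - t) s]
        rw [e1, e2]; simp
      have hpsi : psi v a ((1 - s) • v b + s • x)
          = (1 - s) * psi v a (v b) + s * psi v a x := psi_affine (by ring) a _ _
      rw [hcomb, psi_self] at hpsi
      have hb' : 0 < psi v a (v b) := psi_pos hn hv (fun h => hab h.symm)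
      have hx' : 0 ≤ psi v a x := psi_nonneg_poly hn hv a x hx
      nlinarith
  · rcases le_or_gt t 1 with ht1 | ht1
    · rw [segment_eq_image' ℝ]
      exact ⟨t, ⟨ht0.le, ht1⟩, hxeq.symm⟩
    · exfalso
      set s : ℝ := 1 / t with hs
      have hs0 : 0 < s := by rw [hs]; apply div_pos one_pos; linarith
      have hs1 : s < 1 := by rw [hs, div_lt_one (by linarith)]; linarith
      have hst : s * t = 1 := by rw [hs, one_div, inv_mul_cancel₀ (by linarith : t ≠ 0)]
      have hcomb : (1 - s) • v a + s • x = v b := by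
        rw [hxeq]
        have expand : (1 - s) • v a + s • (v a + t • (v b - v a))
            = (s * t) • v b + (1 - s * t) • v a := by module
        rw [expand, hst]; simp
      have hpsi : psi v b ((1 - s) • v a + s • x)
          = (1 - s) * psi v b (v a) + s * psi v b x := psi_affine (by ring) b _ _
      rw [hcomb, psi_self] at hpsi
      have ha' : 0 < psi v b (v a) := psi_pos hn hv hab
      have hx' : 0 ≤ psi v b x := psi_nonneg_poly hn hv b x hx
      nlinarith

/-- root of an affine function changing sign along a segment -/
lemma root_segment {f : Pt → ℝ}
    (haff : ∀ {t s : ℝ}, t + s = 1 → ∀ x y, f (t • x + s • y) = t * f x + s * f y)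
    {p q : Pt} (hpq : f p * f q < 0) :
    ∃ t : ℝ, t ∈ Icc (0:ℝ) 1 ∧ f ((1 - t) • p + t • q) = 0 ∧ 0 < t := by
  set t : ℝ := f p / (f p - f q) with htdef
  have hne : f p - f q ≠ 0 := by
    intro h
    have : f p = f q := by linarith
    rw [this] at hpq; nlinarith
  have hval : f ((1 - t) • p + t • q) = (1 - t) * f p + t * f q := haff (by ring) p q
  have hzero : (1 - t) * f p + t * f q = 0 := by
    rw [htdef]; field_simp; ring
  rcases mul_neg_iff.1 hpq with ⟨hp, hq⟩ | ⟨hp, hq⟩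
  · have htpos : 0 < t := by rw [htdef]; exact div_pos hp (by linarith)
    refine ⟨t, ⟨htpos.le, ?_⟩, by rw [hval, hzero], htpos⟩
    rw [htdef, div_le_one (by linarith)]; linarith
  · have htalt : t = (-f p) / (f q - f p) := by
      rw [htdef, div_eq_div_iff hne (by intro h; apply hne; linarith)]
      ring
    have htpos : 0 < t := by
      rw [htalt]; exact div_pos (by linarith) (by linarith)
    refine ⟨t, ⟨htpos.le, ?_⟩, by rw [hval, hzero], htpos⟩
    rw [htalt, div_le_one (by linarith)]; linarith

/-- the strictly-left-of-every-edge set -/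
def SL (v : ZMod n → Pt) : Set Pt := {P | ∀ i : ZMod n, 0 < lf v i (i + 1) P}

lemma SL_open : IsOpen (SL (v := v)) := by
  have : SL (v := v) = ⋂ i : ZMod n, {P | 0 < lf v i (i + 1) P} := by
    ext P; simp [SL, mem_iInter]
  rw [this]
  exact isOpen_iInter_of_finite fun i =>
    isOpen_lt continuous_const (continuous_lf v i (i + 1))

lemma SL_subset_poly (hn : 4 ≤ n) (hv : ConvexCCW v) : SL (v := v) ⊆ fullPoly v := by
  intro P hP
  by_contra hPout
  have hpoly_conv : Convex ℝ (fullPoly v) := convex_convexHull ℝ _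
  have hpoly_closed : IsClosed (fullPoly v) :=
    ((Set.finite_range v).isCompact_convexHull (𝕜 := ℝ)).isClosed
  obtain ⟨φ, u, hu1, hu2⟩ := geometric_hahn_banach_closed_point hpoly_conv hpoly_closed hPout
  obtain ⟨k, -, hk⟩ := Finset.exists_max_image Finset.univ (fun k => φ (v k)) ⟨0, Finset.mem_univ 0⟩
  set dp := v (k + 1) - v k with hdp
  set dm := v (k - 1) - v k with hdm
  have hc0 : 0 < cross dp dm := by
    have h := hv k (k - 1) (fun h => one_ne_zero' hn (by linear_combination -h))
      (fun h => two_ne_zero' hn (by linear_combination -h))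
    exact h
  set x := P - v k with hx
  have hβ : 0 < cross dp x := hP k
  have hα : 0 < cross x dm := by
    have h := hP (k - 1)
    have h1 : (k : ZMod n) - 1 + 1 = k := by ring
    rw [h1] at h
    have : lf v (k - 1) k P = cross x dm := by
      unfold lf
      have e1 : v k - v (k - 1) = -dm := by rw [hdm]; abel
      have e2 : P - v (k - 1) = x - dm := by rw [hx, hdm]; abel
      rw [e1, e2, cross_sub_right]
      have : cross (-dm) x = cross x dm := by simp [cross, pt_sub_apply]; ring
      rw [show cross (-dm) (x) - cross (-dm) dm = cross x dm - cross (-dm) dm from by rw [this]]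
      have : cross (-dm) dm = 0 := by simp [cross]; ring
      rw [this]; ring
    linarith [this ▸ h]
  have hdecomp := cross_decomp (ne_of_gt hc0) x
  set α := cross x dm / cross dp dm with hαd
  set β := cross dp x / cross dp dm with hβd
  have hαpos : 0 < α := div_pos hα hc0
  have hβpos : 0 < β := div_pos hβ hc0
  have hφx : φ x = α * φ dp + β * φ dm := by
    rw [← hdecomp]
    simp [map_add, map_smul, smul_eq_mul]
  have hP' : φ P = φ (v k) + φ x := by
    rw [hx, map_sub]; ring
  have hdp' : φ dp = φ (v (k + 1)) - φ (v k) := by rw [hdp, map_sub]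
  have hdm' : φ dm = φ (v (k - 1)) - φ (v k) := by rw [hdm, map_sub]
  have h1 : φ dp ≤ 0 := by
    rw [hdp']
    have := hk (k + 1) (Finset.mem_univ _)
    linarith
  have h2 : φ dm ≤ 0 := by
    rw [hdm']
    have := hk (k - 1) (Finset.mem_univ _)
    linarith
  have hub : φ (v k) < u := hu1 (v k) (subset_convexHull ℝ _ ⟨k, rfl⟩)
  have : φ P ≤ φ (v k) := by
    rw [hP', hφx]
    nlinarith
  linarith

lemma SL_subset_interior (hn : 4 ≤ n) (hv : ConvexCCW v) :
    SL (v := v) ⊆ interior (fullPoly v) :=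
  interior_maximal (SL_subset_poly hn hv) SL_open

end BNC2
namespace BNC2
open BNC Set

variable {n : ℕ} [NeZero n]

/-- chosen first endpoint of an unordered pair -/
def pA (e : Sym2 (ZMod n)) : ZMod n := (Quot.out e).1
/-- chosen second endpoint of an unordered pair -/
def pB (e : Sym2 (ZMod n)) : ZMod n := (Quot.out e).2

lemma pMk (e : Sym2 (ZMod n)) : s(pA e, pB e) = e := by
  rw [pA, pB]
  exact Quot.out_eq e

/-- the line functional of a pair -/
def sf (v : ZMod n → Pt) (e : Sym2 (ZMod n)) (P : Pt) : ℝ := lf v (pA e) (pB e) P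

lemma continuous_sf (v : ZMod n → Pt) (e : Sym2 (ZMod n)) : Continuous (sf v e) :=
  continuous_lf v _ _

lemma sf_affine (v : ZMod n → Pt) (e : Sym2 (ZMod n)) {t s : ℝ} (hts : t + s = 1) (x y : Pt) :
    sf v e (t • x + s • y) = t * sf v e x + s * sf v e y := lf_affine v _ _ hts x y

/-- the midpoint of the pair `e` -/
def midp (v : ZMod n → Pt) (e : Sym2 (ZMod n)) : Pt :=
  (1/2 : ℝ) • v (pA e) + (1/2 : ℝ) • v (pB e)

section matching

variable {v : ZMod n → Pt} {M : Set (Sym2 (ZMod n))}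

/-- facts about a diagonal of the matching -/
lemma diag_ne (hM : IsNCMatching v M) {e : Sym2 (ZMod n)} (he : e ∈ fullDiags M) :
    pA e ≠ pB e := by
  intro h
  have hd := hM.1.1 e he.1
  apply hd
  rw [← pMk e]
  exact Sym2.mk_isDiag_iff.2 h

lemma diag_ne_succ (hM : IsNCMatching v M) {e : Sym2 (ZMod n)} (he : e ∈ fullDiags M) :
    pB e ≠ pA e + 1 ∧ pA e ≠ pB e + 1 := by
  constructor
  · intro h
    apply he.2
    refine ⟨pA e, ?_⟩
    conv_lhs => rw [← pMk e]
    rw [h]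
  · intro h
    apply he.2
    refine ⟨pB e, ?_⟩
    conv_lhs => rw [← pMk e]
    rw [h, Sym2.eq_swap]

lemma pairSeg_eq (v : ZMod n → Pt) (e : Sym2 (ZMod n)) :
    pairSeg v e = segment ℝ (v (pA e)) (v (pB e)) := by
  conv_lhs => rw [← pMk e]
  rfl

lemma pairSeg_subset_poly (v : ZMod n → Pt) (e : Sym2 (ZMod n)) :
    pairSeg v e ⊆ fullPoly v := by
  rw [pairSeg_eq]
  apply segment_subset_convexHull <;> exact ⟨_, rfl⟩

lemma sf_zero_on_seg (v : ZMod n → Pt) (e : Sym2 (ZMod n)) {x : Pt} (hx : x ∈ pairSeg v e) :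
    sf v e x = 0 := by
  rw [pairSeg_eq] at hx
  obtain ⟨ta, tb, ha, hb, hab, rfl⟩ := hx
  rw [sf, lf_affine v _ _ hab, lf_self_left, lf_self_right]
  ring

lemma midp_mem_seg (v : ZMod n → Pt) (e : Sym2 (ZMod n)) : midp v e ∈ pairSeg v e := by
  rw [pairSeg_eq]
  exact ⟨1/2, 1/2, by norm_num, by norm_num, by norm_num, rfl⟩

/-- a point of the polygon where the line functional of a diagonal vanishes lies on
its segment -/
lemma sf_zero_mem (hn : 4 ≤ n) (hv : ConvexCCW v) (hM : IsNCMatching v M)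
    {e : Sym2 (ZMod n)} (he : e ∈ fullDiags M) {x : Pt} (hx : x ∈ fullPoly v)
    (h0 : sf v e x = 0) : x ∈ pairSeg v e := by
  rw [pairSeg_eq]
  exact line_inter_poly hn hv (diag_ne hM he) hx h0

lemma seg_disjoint (hM : IsNCMatching v M) {e g : Sym2 (ZMod n)}
    (he : e ∈ fullDiags M) (hg : g ∈ fullDiags M) (hne : e ≠ g) :
    Disjoint (pairSeg v e) (pairSeg v g) :=
  hM.2 e he.1 g hg.1 hne

lemma sf_ne_zero_on_other (hn : 4 ≤ n) (hv : ConvexCCW v) (hM : IsNCMatching v M)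
    {e g : Sym2 (ZMod n)} (he : e ∈ fullDiags M) (hg : g ∈ fullDiags M) (hne : g ≠ e)
    {x : Pt} (hx : x ∈ pairSeg v e) : sf v g x ≠ 0 := by
  intro h0
  have hxp : x ∈ fullPoly v := pairSeg_subset_poly v e hx
  have : x ∈ pairSeg v g := sf_zero_mem hn hv hM hg hxp h0
  exact (seg_disjoint hM he hg (fun h => hne h.symm)).ne_of_mem hx this rfl

/-- the side of the line of `g` on which the segment of `e` lies -/
def sgn (v : ZMod n → Pt) (g e : Sym2 (ZMod n)) : ℝ :=
  if 0 < sf v g (midp v e) then 1 else -1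

lemma sgn_vals (v : ZMod n → Pt) (g e : Sym2 (ZMod n)) : sgn v g e = 1 ∨ sgn v g e = -1 := by
  unfold sgn; split <;> simp

lemma sgn_ne_zero (v : ZMod n → Pt) (g e : Sym2 (ZMod n)) : sgn v g e ≠ 0 := by
  rcases sgn_vals v g e with h | h <;> rw [h] <;> norm_num

/-- the sign of the line functional of `g` is constant on the segment of `e` -/
lemma sgn_mul_pos (hn : 4 ≤ n) (hv : ConvexCCW v) (hM : IsNCMatching v M)
    {e g : Sym2 (ZMod n)} (he : e ∈ fullDiags M) (hg : g ∈ fullDiags M) (hne : g ≠ e)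
    {x : Pt} (hx : x ∈ pairSeg v e) : 0 < sgn v g e * sf v g x := by
  have hxne : sf v g x ≠ 0 := sf_ne_zero_on_other hn hv hM he hg hne hx
  have hmne : sf v g (midp v e) ≠ 0 :=
    sf_ne_zero_on_other hn hv hM he hg hne (midp_mem_seg v e)
  have hsame : 0 < sf v g (midp v e) * sf v g x := by
    by_contra hc
    push_neg at hc
    have hlt : sf v g (midp v e) * sf v g x < 0 :=
      lt_of_le_of_ne hc (mul_ne_zero hmne hxne)
    obtain ⟨t, hticc, ht0, -⟩ := root_segment (f := sf v g)
      (fun hts x y => sf_affine v g hts x y)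
      (p := midp v e) (q := x) hlt
    have hzmem : (1 - t) • midp v e + t • x ∈ pairSeg v e := by
      rw [pairSeg_eq]
      have h1 : midp v e ∈ segment ℝ (v (pA e)) (v (pB e)) := by
        rw [← pairSeg_eq]; exact midp_mem_seg v e
      have h2 : x ∈ segment ℝ (v (pA e)) (v (pB e)) := by
        rw [← pairSeg_eq]; exact hx
      exact (convex_segment _ _) h1 h2 (by linarith [hticc.2]) hticc.1 (by ring)
    exact sf_ne_zero_on_other hn hv hM he hg hne hzmem ht0
  rcases lt_or_gt_of_ne hmne with hm | hm
  · have hxlt : sf v g x < 0 := by nlinarith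
    unfold sgn
    rw [if_neg (by linarith)]
    nlinarith
  · have hxgt : 0 < sf v g x := by nlinarith
    unfold sgn
    rw [if_pos hm]
    linarith

end matching

end BNC2
namespace BNC2
open BNC Set

variable {n : ℕ} [NeZero n]

/-- rotation by 90 degrees -/
def rot (w : Pt) : Pt := !₂[-(w 1), w 0]

lemma rot_apply0 (w : Pt) : rot w 0 = -(w 1) := rfl
lemma rot_apply1 (w : Pt) : rot w 1 = w 0 := rfl

lemma coord_ne_zero {w : Pt} (hw : w ≠ 0) : w 0 ≠ 0 ∨ w 1 ≠ 0 := by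
  by_contra hc
  push_neg at hc
  exact hw (by ext i; fin_cases i <;> simp [hc.1, hc.2])

lemma cross_rot_pos {w : Pt} (hw : w ≠ 0) : 0 < cross w (rot w) := by
  have : cross w (rot w) = w 0 ^ 2 + w 1 ^ 2 := by
    simp [cross, rot_apply0, rot_apply1]; ring
  rw [this]
  rcases coord_ne_zero hw with h | h
  · have h2 : 0 < w 0 * w 0 := mul_self_pos.2 h
    nlinarith [sq_nonneg (w 1)]
  · have h2 : 0 < w 1 * w 1 := mul_self_pos.2 h
    nlinarith [sq_nonneg (w 0)]

lemma rot_ne_zero {w : Pt} (hw : w ≠ 0) : rot w ≠ 0 := by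
  intro h
  apply hw
  have h0 : rot w 0 = (0 : Pt) 0 := by rw [h]
  have h1 : rot w 1 = (0 : Pt) 1 := by rw [h]
  rw [rot_apply0] at h0
  rw [rot_apply1] at h1
  ext i; fin_cases i
  · simpa using h1
  · simpa using h0

section cells

variable {v : ZMod n → Pt} {M : Set (Sym2 (ZMod n))}

lemma sf_add (v : ZMod n → Pt) (e : Sym2 (ZMod n)) (P h : Pt) :
    sf v e (P + h) = sf v e P + cross (v (pB e) - v (pA e)) h := by
  unfold sf lf
  rw [show P + h - v (pA e) = (P - v (pA e)) + h by abel, cross_add_right]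

/-- midpoint of a diagonal is strictly inside the polygon -/
lemma midp_mem_SL (hv : ConvexCCW v) (hM : IsNCMatching v M)
    {e : Sym2 (ZMod n)} (he : e ∈ fullDiags M) : midp v e ∈ SL (v := v) := by
  intro i
  have hmid : midp v e = (1/2 : ℝ) • v (pA e) + (1/2 : ℝ) • v (pB e) := rfl
  rw [hmid, lf_affine v _ _ (by norm_num)]
  have ha := edge_nonneg hv i (pA e)
  have hb := edge_nonneg hv i (pB e)
  have hone : ¬ ((pA e = i ∨ pA e = i + 1) ∧ (pB e = i ∨ pB e = i + 1)) := by
    rintro ⟨h1 | h1, h2 | h2⟩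
    · exact diag_ne hM he (h1.trans h2.symm)
    · exact (diag_ne_succ hM he).1 (by rw [h2, ← h1])
    · exact (diag_ne_succ hM he).2 (by rw [h1, ← h2])
    · exact diag_ne hM he (h1.trans h2.symm)
  push_neg at hone
  by_cases hA : pA e = i ∨ pA e = i + 1
  · obtain ⟨hB1, hB2⟩ := hone hA
    have hb' : 0 < lf v i (i + 1) (v (pB e)) := hv i (pB e) hB1 hB2
    nlinarith
  · push_neg at hA
    have ha' : 0 < lf v i (i + 1) (v (pA e)) := hv i (pA e) hA.1 hA.2
    nlinarith

/-- an open cell determined by a sign vector -/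
def cell (v : ZMod n → Pt) (D : Set (Sym2 (ZMod n))) (σ : Sym2 (ZMod n) → ℝ) : Set Pt :=
  interior (fullPoly v) ∩ {P | ∀ g ∈ D, 0 < σ g * sf v g P}

/-- the closed cell determined by a sign vector -/
def Kc (v : ZMod n → Pt) (D : Set (Sym2 (ZMod n))) (σ : Sym2 (ZMod n) → ℝ) : Set Pt :=
  fullPoly v ∩ {P | ∀ g ∈ D, 0 ≤ σ g * sf v g P}

lemma cell_subset_Kc (v : ZMod n → Pt) (D : Set (Sym2 (ZMod n))) (σ : Sym2 (ZMod n) → ℝ) :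
    cell v D σ ⊆ Kc v D σ :=
  fun x hx => ⟨interior_subset hx.1, fun g hg => (hx.2 g hg).le⟩

lemma cell_open (v : ZMod n → Pt) (D : Set (Sym2 (ZMod n))) (σ : Sym2 (ZMod n) → ℝ) :
    IsOpen (cell v D σ) := by
  apply IsOpen.inter isOpen_interior
  have : {P | ∀ g ∈ D, 0 < σ g * sf v g P} = ⋂ g ∈ D, {P | 0 < σ g * sf v g P} := by
    ext P; simp
  rw [this]
  exact (Set.toFinite D).isOpen_biInter fun g _ =>
    isOpen_lt continuous_const (continuous_const.mul (continuous_sf v g))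

lemma cell_convex (v : ZMod n → Pt) (D : Set (Sym2 (ZMod n))) (σ : Sym2 (ZMod n) → ℝ) :
    Convex ℝ (cell v D σ) := by
  apply Convex.inter (convex_convexHull ℝ _).interior
  intro x hx y hy a b ha hb hab
  intro g hg
  have := hx g hg
  have := hy g hg
  have hrw : σ g * sf v g (a • x + b • y) = a * (σ g * sf v g x) + b * (σ g * sf v g y) := by
    rw [sf_affine v g hab]; ring
  simp only [mem_setOf_eq] at *
  rw [hrw]
  rcases eq_or_lt_of_le ha with rfl | ha'
  · simp only [zero_add] at hab; rw [hab]; nlinarith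
  · nlinarith

lemma Kc_convex (v : ZMod n → Pt) (D : Set (Sym2 (ZMod n))) (σ : Sym2 (ZMod n) → ℝ) :
    Convex ℝ (Kc v D σ) := by
  apply Convex.inter (convex_convexHull ℝ _)
  intro x hx y hy a b ha hb hab
  intro g hg
  have h1 := hx g hg
  have h2 := hy g hg
  have hrw : σ g * sf v g (a • x + b • y) = a * (σ g * sf v g x) + b * (σ g * sf v g y) := by
    rw [sf_affine v g hab]; ring
  simp only [mem_setOf_eq] at *
  rw [hrw]
  nlinarith

lemma Kc_closed (v : ZMod n → Pt) (D : Set (Sym2 (ZMod n))) (σ : Sym2 (ZMod n) → ℝ) :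
    IsClosed (Kc v D σ) := by
  apply IsClosed.inter ((Set.finite_range v).isCompact_convexHull (𝕜 := ℝ)).isClosed
  have : {P | ∀ g ∈ D, 0 ≤ σ g * sf v g P} = ⋂ g ∈ D, {P | 0 ≤ σ g * sf v g P} := by
    ext P; simp
  rw [this]
  exact isClosed_biInter fun g _ =>
    isClosed_le continuous_const (continuous_const.mul (continuous_sf v g))

lemma Kc_subset_poly (v : ZMod n → Pt) (D : Set (Sym2 (ZMod n))) (σ : Sym2 (ZMod n) → ℝ) :
    Kc v D σ ⊆ fullPoly v := inter_subset_left

/-- description of the region space -/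
lemma regionSpace_eq (hn : 4 ≤ n) (hv : ConvexCCW v) (hM : IsNCMatching v M) :
    regionSpace v (fullPoly v) (fullDiags M)
      = {P | P ∈ interior (fullPoly v) ∧ ∀ g ∈ fullDiags M, sf v g P ≠ 0} := by
  ext x
  constructor
  · rintro ⟨h1, h2⟩
    exact ⟨h1, fun g hg h0 =>
      h2 (Set.mem_biUnion hg (sf_zero_mem hn hv hM hg (interior_subset h1) h0))⟩
  · rintro ⟨h1, h2⟩
    refine ⟨h1, fun hmem => ?_⟩
    obtain ⟨g, hg, hx⟩ := Set.mem_iUnion₂.1 hmem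
    exact h2 g hg (sf_zero_on_seg v g hx)

/-- the sign vector of a point -/
def sigOf (v : ZMod n → Pt) (x : Pt) : Sym2 (ZMod n) → ℝ :=
  fun g => if 0 < sf v g x then 1 else -1

lemma sigOf_vals (v : ZMod n → Pt) (x : Pt) (g : Sym2 (ZMod n)) :
    sigOf v x g = 1 ∨ sigOf v x g = -1 := by unfold sigOf; split <;> simp

lemma mem_cell_sigOf (hn : 4 ≤ n) (hv : ConvexCCW v) (hM : IsNCMatching v M) {x : Pt}
    (hx : x ∈ regionSpace v (fullPoly v) (fullDiags M)) :
    x ∈ cell v (fullDiags M) (sigOf v x) := by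
  rw [regionSpace_eq hn hv hM] at hx
  refine ⟨hx.1, fun g hg => ?_⟩
  have hne := hx.2 g hg
  unfold sigOf
  split
  · rename_i h; linarith
  · rename_i h
    push_neg at h
    have : sf v g x < 0 := lt_of_le_of_ne h hne
    nlinarith

lemma cell_sub_regionSpace (hn : 4 ≤ n) (hv : ConvexCCW v) (hM : IsNCMatching v M)
    (σ : Sym2 (ZMod n) → ℝ) :
    cell v (fullDiags M) σ ⊆ regionSpace v (fullPoly v) (fullDiags M) := by
  intro x hx
  rw [regionSpace_eq hn hv hM]
  refine ⟨hx.1, fun g hg h0 => ?_⟩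
  have := hx.2 g hg
  rw [h0, mul_zero] at this
  exact lt_irrefl 0 this

/-- connected components of the region space are cells -/
lemma comp_eq_cell (hn : 4 ≤ n) (hv : ConvexCCW v) (hM : IsNCMatching v M) {x : Pt}
    (hx : x ∈ regionSpace v (fullPoly v) (fullDiags M)) :
    connectedComponentIn (regionSpace v (fullPoly v) (fullDiags M)) x
      = cell v (fullDiags M) (sigOf v x) := by
  apply Subset.antisymm
  · intro y hy
    have hysub : y ∈ regionSpace v (fullPoly v) (fullDiags M) :=
      connectedComponentIn_subset _ _ hy
    have hyint : y ∈ interior (fullPoly v) := by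
      rw [regionSpace_eq hn hv hM] at hysub; exact hysub.1
    refine ⟨hyint, fun g hg => ?_⟩
    by_contra hc
    push_neg at hc
    have hyne : sf v g y ≠ 0 := by
      rw [regionSpace_eq hn hv hM] at hysub; exact hysub.2 g hg
    have hxne : sf v g x ≠ 0 := by
      have hx2 := hx
      rw [regionSpace_eq hn hv hM] at hx2
      exact hx2.2 g hg
    have hxmem := mem_connectedComponentIn hx
    have hcont : ContinuousOn (sf v g)
        (connectedComponentIn (regionSpace v (fullPoly v) (fullDiags M)) x) :=
      (continuous_sf v g).continuousOn
    have hpre : IsPreconnected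
        (connectedComponentIn (regionSpace v (fullPoly v) (fullDiags M)) x) :=
      isPreconnected_connectedComponentIn
    have hopp : sf v g x * sf v g y < 0 := by
      unfold sigOf at hc
      split at hc
      · rename_i h
        rw [one_mul] at hc
        nlinarith [lt_of_le_of_ne hc hyne]
      · rename_i h
        push_neg at h
        have hxlt : sf v g x < 0 := lt_of_le_of_ne h hxne
        have h2 : 0 ≤ sf v g y := by nlinarith
        nlinarith [lt_of_le_of_ne h2 (Ne.symm hyne)]
    have hfalse : ∀ z ∈ connectedComponentIn (regionSpace v (fullPoly v) (fullDiags M)) x,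
        sf v g z ≠ 0 := by
      intro z hz
      have := connectedComponentIn_subset _ _ hz
      rw [regionSpace_eq hn hv hM] at this
      exact this.2 g hg
    rcases mul_neg_iff.1 hopp with ⟨h1, h2⟩ | ⟨h1, h2⟩
    · have h0 : (0:ℝ) ∈ Icc (sf v g y) (sf v g x) := ⟨h2.le, h1.le⟩
      obtain ⟨z, hz, hz0⟩ := hpre.intermediate_value hy hxmem hcont h0
      exact hfalse z hz hz0
    · have h0 : (0:ℝ) ∈ Icc (sf v g x) (sf v g y) := ⟨h1.le, h2.le⟩
      obtain ⟨z, hz, hz0⟩ := hpre.intermediate_value hxmem hy hcont h0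
      exact hfalse z hz hz0
  · exact (cell_convex v _ _).isPreconnected.subset_connectedComponentIn
      (mem_cell_sigOf hn hv hM hx) (cell_sub_regionSpace hn hv hM _)

end cells

end BNC2
namespace BNC2
open BNC Set Filter

variable {n : ℕ} [NeZero n] {v : ZMod n → Pt} {M : Set (Sym2 (ZMod n))}

lemma closure_cell (σ : Sym2 (ZMod n) → ℝ) (hne : (cell v (fullDiags M) σ).Nonempty) :
    closure (cell v (fullDiags M) σ) = Kc v (fullDiags M) σ := by
  apply Subset.antisymm
  · exact closure_minimal (cell_subset_Kc v _ σ) (Kc_closed v _ σ)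
  · obtain ⟨x₀, hx₀⟩ := hne
    intro y hy
    set u : ℕ → Pt := fun k => (1/(k+1) : ℝ) • x₀ + (1 - 1/(k+1) : ℝ) • y with hu
    have humem : ∀ k, u k ∈ cell v (fullDiags M) σ := by
      intro k
      have hk0 : (0:ℝ) < 1/(k+1) := by positivity
      have hk1 : (0:ℝ) ≤ 1 - 1/(k+1) := by
        have : (1:ℝ)/(k+1) ≤ 1 := by
          rw [div_le_one (by positivity)]
          simp
        linarith
      constructor
      · exact (convex_convexHull ℝ _).combo_interior_self_mem_interior hx₀.1
          (Kc_subset_poly v _ σ hy) hk0 hk1 (by ring)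
      · intro g hg
        have h1 := hx₀.2 g hg
        have h2 := hy.2 g hg
        have hrw : σ g * sf v g (u k)
            = (1/(k+1)) * (σ g * sf v g x₀) + (1 - 1/(k+1)) * (σ g * sf v g y) := by
          rw [hu]
          simp only
          rw [sf_affine v g (by ring)]
          ring
        rw [hrw]
        nlinarith
    have hconv : Tendsto u atTop (nhds y) := by
      have heq : ∀ k : ℕ, u k = y + (1/(k+1) : ℝ) • (x₀ - y) := by
        intro k
        rw [hu]
        simp only
        module
      rw [show u = fun k : ℕ => y + (1/(k+1) : ℝ) • (x₀ - y) from funext heq]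
      have h0 : Tendsto (fun k : ℕ => (1/(k+1) : ℝ)) atTop (nhds 0) :=
        tendsto_one_div_add_atTop_nhds_zero_nat
      have := (h0.smul_const (x₀ - y)).const_add y
      simpa using this
    exact mem_closure_of_tendsto hconv (Filter.Eventually.of_forall humem)

lemma interior_Kc (hn : 4 ≤ n) (hv : ConvexCCW v) (hM : IsNCMatching v M)
    (σ : Sym2 (ZMod n) → ℝ) (hσ : ∀ g ∈ fullDiags M, σ g = 1 ∨ σ g = -1) :
    interior (Kc v (fullDiags M) σ) = cell v (fullDiags M) σ := by
  apply Subset.antisymm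
  · intro y hy
    have hyK : y ∈ Kc v (fullDiags M) σ := interior_subset hy
    have hyint : y ∈ interior (fullPoly v) :=
      interior_mono (Kc_subset_poly v _ σ) hy
    refine ⟨hyint, fun g hg => ?_⟩
    have h0 : 0 ≤ σ g * sf v g y := hyK.2 g hg
    rcases eq_or_lt_of_le h0 with heq | hlt
    · exfalso
      have hσg : σ g ≠ 0 := by
        rcases hσ g hg with h | h <;> rw [h] <;> norm_num
      have hsf0 : sf v g y = 0 := by
        rcases mul_eq_zero.1 heq.symm with h | h
        · exact absurd h hσg
        · exact h
      -- perturb to violate the closed halfplane condition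
      obtain ⟨ε, hε, hball⟩ := Metric.mem_nhds_iff.1 (mem_interior_iff_mem_nhds.1 hy)
      set w : Pt := v (pB g) - v (pA g) with hw
      have hwne : w ≠ 0 := sub_ne_zero.2 fun h => diag_ne hM hg (vinj hn hv h.symm)
      set uu : Pt := rot w with huu
      have huune : uu ≠ 0 := rot_ne_zero hwne
      have hc : 0 < cross w uu := cross_rot_pos hwne
      have hunorm : 0 < ‖uu‖ := norm_pos_iff.2 huune
      set δ : ℝ := ε / (2 * ‖uu‖) with hδ
      have hδpos : 0 < δ := by rw [hδ]; positivity
      set y' : Pt := y + (-(σ g * δ)) • uu with hy'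
      have hy'mem : y' ∈ Metric.ball y ε := by
        rw [mem_ball_iff_norm, hy']
        have : y + -(σ g * δ) • uu - y = (-(σ g * δ)) • uu := by abel
        rw [this, norm_smul]
        have habs : |σ g| = 1 := by
          rcases hσ g hg with h | h <;> rw [h] <;> norm_num
        rw [Real.norm_eq_abs, abs_neg, abs_mul, habs, one_mul, abs_of_pos hδpos, hδ]
        rw [div_mul_eq_mul_div, mul_comm]
        rw [div_lt_iff₀ (by positivity)]
        nlinarith
      have hy'K : y' ∈ Kc v (fullDiags M) σ := hball hy'mem
      have : 0 ≤ σ g * sf v g y' := hy'K.2 g hg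
      rw [hy', sf_add, hsf0, zero_add, cross_smul_right, ← hw] at this
      have hσsq : σ g * σ g = 1 := by
        rcases hσ g hg with h | h <;> rw [h] <;> norm_num
      have hrw2 : σ g * (-(σ g * δ) * cross w uu) = -((σ g * σ g) * (δ * cross w uu)) := by
        ring
      rw [hrw2, hσsq, one_mul] at this
      nlinarith [mul_pos hδpos hc]
    · exact hlt
  · exact interior_maximal (cell_subset_Kc v _ σ) (cell_open v _ σ)

lemma frontier_Kc (hn : 4 ≤ n) (hv : ConvexCCW v) (hM : IsNCMatching v M)
    (σ : Sym2 (ZMod n) → ℝ) (hσ : ∀ g ∈ fullDiags M, σ g = 1 ∨ σ g = -1) :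
    frontier (Kc v (fullDiags M) σ) = Kc v (fullDiags M) σ \ cell v (fullDiags M) σ := by
  rw [(Kc_closed v _ σ).frontier_eq, interior_Kc hn hv hM σ hσ]

/-- the boundary pairs of the cell of `σ`, combinatorially -/
def Bset (v : ZMod n → Pt) (D : Set (Sym2 (ZMod n))) (σ : Sym2 (ZMod n) → ℝ) :
    Set (Sym2 (ZMod n)) :=
  {e ∈ D | ∀ g ∈ D, g ≠ e → σ g = sgn v g e}

lemma boundDiags_Kc (hn : 4 ≤ n) (hv : ConvexCCW v) (hM : IsNCMatching v M)
    (σ : Sym2 (ZMod n) → ℝ) (hσ : ∀ g ∈ fullDiags M, σ g = 1 ∨ σ g = -1)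
    (hne : (cell v (fullDiags M) σ).Nonempty) :
    boundDiags v (fullPoly v) (fullDiags M) (Kc v (fullDiags M) σ)
      = Bset v (fullDiags M) σ := by
  ext e
  constructor
  · rintro ⟨he, hsub⟩
    refine ⟨he, fun g hg hge => ?_⟩
    have hmid : midp v e ∈ frontier (Kc v (fullDiags M) σ) := hsub (midp_mem_seg v e)
    rw [frontier_Kc hn hv hM σ hσ] at hmid
    have h0 : 0 ≤ σ g * sf v g (midp v e) := hmid.1.2 g hg
    have hpos : 0 < sgn v g e * sf v g (midp v e) :=
      sgn_mul_pos hn hv hM he hg hge (midp_mem_seg v e)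
    rcases hσ g hg with h | h <;> rcases sgn_vals v g e with h' | h' <;>
      rw [h, h'] <;> rw [h] at h0 <;> rw [h'] at hpos <;> nlinarith
  · rintro ⟨he, hB⟩
    refine ⟨he, fun x hx => ?_⟩
    rw [frontier_Kc hn hv hM σ hσ]
    constructor
    · refine ⟨pairSeg_subset_poly v e hx, fun g hg => ?_⟩
      rcases eq_or_ne g e with rfl | hge
      · rw [sf_zero_on_seg v g hx, mul_zero]
      · rw [hB g hg hge]
        exact (sgn_mul_pos hn hv hM he hg hge hx).le
    · intro hcell
      have := hcell.2 e he
      rw [sf_zero_on_seg v e hx, mul_zero] at this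
      exact lt_irrefl 0 this

lemma cell_congr {D : Set (Sym2 (ZMod n))} {σ σ' : Sym2 (ZMod n) → ℝ}
    (h : ∀ g ∈ D, σ g = σ' g) : cell v D σ = cell v D σ' := by
  unfold cell
  congr 1
  ext P
  constructor <;> intro hP g hg
  · rw [← h g hg]; exact hP g hg
  · rw [h g hg]; exact hP g hg

lemma Kc_congr {D : Set (Sym2 (ZMod n))} {σ σ' : Sym2 (ZMod n) → ℝ}
    (h : ∀ g ∈ D, σ g = σ' g) : Kc v D σ = Kc v D σ' := by
  unfold Kc
  congr 1
  ext P
  constructor <;> intro hP g hg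
  · rw [← h g hg]; exact hP g hg
  · rw [h g hg]; exact hP g hg

lemma Bset_congr {D : Set (Sym2 (ZMod n))} {σ σ' : Sym2 (ZMod n) → ℝ}
    (h : ∀ g ∈ D, σ g = σ' g) : Bset v D σ = Bset v D σ' := by
  unfold Bset
  ext e
  constructor <;> rintro ⟨he, hB⟩ <;> refine ⟨he, fun g hg hge => ?_⟩
  · rw [← h g hg]; exact hB g hg hge
  · rw [h g hg]; exact hB g hg hge

/-- characterization of regions -/
lemma region_iff (hn : 4 ≤ n) (hv : ConvexCCW v) (hM : IsNCMatching v M) (R : Set Pt) :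
    IsRegion v (fullPoly v) (fullDiags M) R
      ↔ ∃ σ : Sym2 (ZMod n) → ℝ, (∀ g ∈ fullDiags M, σ g = 1 ∨ σ g = -1)
          ∧ (cell v (fullDiags M) σ).Nonempty ∧ R = Kc v (fullDiags M) σ := by
  constructor
  · rintro ⟨x, hx, rfl⟩
    refine ⟨sigOf v x, fun g _ => sigOf_vals v x g, ⟨x, mem_cell_sigOf hn hv hM hx⟩, ?_⟩
    rw [comp_eq_cell hn hv hM hx, closure_cell _ ⟨x, mem_cell_sigOf hn hv hM hx⟩]
  · rintro ⟨σ, hσ, ⟨x, hx⟩, rfl⟩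
    refine ⟨x, cell_sub_regionSpace hn hv hM σ hx, ?_⟩
    rw [comp_eq_cell hn hv hM (cell_sub_regionSpace hn hv hM σ hx),
      closure_cell _ ⟨x, mem_cell_sigOf hn hv hM (cell_sub_regionSpace hn hv hM σ hx)⟩]
    apply Kc_congr
    intro g hg
    have hpos := hx.2 g hg
    rcases hσ g hg with h | h <;> rw [h] <;> rw [h] at hpos <;> unfold sigOf
    · rw [if_pos (by linarith)]
    · rw [if_neg (by intro hlt; nlinarith)]

/-- the one-sided sign vector of a diagonal -/
def sigSide (v : ZMod n → Pt) (e : Sym2 (ZMod n)) (ς : ℝ) : Sym2 (ZMod n) → ℝ :=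
  fun g => if g = e then ς else sgn v g e

/-- each one-sided cell of a diagonal is nonempty -/
lemma cell_perturb (hn : 4 ≤ n) (hv : ConvexCCW v) (hM : IsNCMatching v M)
    {e : Sym2 (ZMod n)} (he : e ∈ fullDiags M) (ς : ℝ) (hς : ς = 1 ∨ ς = -1) :
    (cell v (fullDiags M) (sigSide v e ς)).Nonempty := by
  set m := midp v e with hm
  have hmint : m ∈ interior (fullPoly v) := SL_subset_interior hn hv (midp_mem_SL hv hM he)
  set U : Set Pt := interior (fullPoly v)
      ∩ ⋂ g ∈ fullDiags M, {P | g ≠ e → 0 < sf v g m * sf v g P} with hU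
  have hUopen : IsOpen U := by
    apply IsOpen.inter isOpen_interior
    apply (Set.toFinite (fullDiags M)).isOpen_biInter
    intro g hg
    rcases eq_or_ne g e with rfl | hge
    · have : {P : Pt | g ≠ g → 0 < sf v g m * sf v g P} = univ := by
        ext P; simp
      rw [this]; exact isOpen_univ
    · have : {P : Pt | g ≠ e → 0 < sf v g m * sf v g P}
          = {P : Pt | 0 < sf v g m * sf v g P} := by
        ext P; simp [hge]
      rw [this]
      exact isOpen_lt continuous_const (continuous_const.mul (continuous_sf v g))
  have hmU : m ∈ U := by
    refine ⟨hmint, ?_⟩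
    rw [mem_iInter₂]
    intro g hg
    intro hge
    have hne : sf v g m ≠ 0 := sf_ne_zero_on_other hn hv hM he hg hge (midp_mem_seg v e)
    exact mul_self_pos.2 hne
  obtain ⟨ε, hε, hball⟩ := Metric.mem_nhds_iff.1 (hUopen.mem_nhds hmU)
  set w : Pt := v (pB e) - v (pA e) with hw
  have hwne : w ≠ 0 := sub_ne_zero.2 fun h => diag_ne hM he (vinj hn hv h.symm)
  set uu : Pt := rot w with huu
  have hc : 0 < cross w uu := cross_rot_pos hwne
  have hunorm : 0 < ‖uu‖ := norm_pos_iff.2 (rot_ne_zero hwne)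
  set δ : ℝ := ε / (2 * ‖uu‖) with hδ
  have hδpos : 0 < δ := by rw [hδ]; positivity
  set x : Pt := m + (ς * δ) • uu with hx
  have hxball : x ∈ Metric.ball m ε := by
    rw [mem_ball_iff_norm, hx]
    have : m + (ς * δ) • uu - m = (ς * δ) • uu := by abel
    rw [this, norm_smul]
    have habs : |ς| = 1 := by rcases hς with h | h <;> rw [h] <;> norm_num
    rw [Real.norm_eq_abs, abs_mul, habs, one_mul, abs_of_pos hδpos, hδ]
    rw [div_mul_eq_mul_div, mul_comm]
    rw [div_lt_iff₀ (by positivity)]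
    nlinarith
  have hxU : x ∈ U := hball hxball
  have hsfm : sf v e m = 0 := sf_zero_on_seg v e (midp_mem_seg v e)
  refine ⟨x, hxU.1, fun g hg => ?_⟩
  rcases eq_or_ne g e with rfl | hge
  · unfold sigSide
    rw [if_pos rfl, hx, sf_add, hsfm, zero_add, cross_smul_right, ← hw]
    have hςsq : ς * ς = 1 := by rcases hς with h | h <;> rw [h] <;> norm_num
    have hrw2 : ς * (ς * δ * cross w uu) = (ς * ς) * (δ * cross w uu) := by ring
    rw [hrw2, hςsq, one_mul]
    exact mul_pos hδpos hc
  · unfold sigSide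
    rw [if_neg hge]
    have hU2 := hxU.2
    rw [mem_iInter₂] at hU2
    have hprod : 0 < sf v g m * sf v g x := hU2 g hg hge
    have hpos : 0 < sgn v g e * sf v g m :=
      sgn_mul_pos hn hv hM he hg hge (midp_mem_seg v e)
    rcases sgn_vals v g e with h | h <;> rw [h] <;> rw [h] at hpos <;> nlinarith

end BNC2
namespace BNC2
open BNC Set

variable {n : ℕ} [NeZero n] {v : ZMod n → Pt} {M : Set (Sym2 (ZMod n))}

lemma sigSide_vals (v : ZMod n → Pt) (e : Sym2 (ZMod n)) {ς : ℝ} (hς : ς = 1 ∨ ς = -1) :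
    ∀ g : Sym2 (ZMod n), sigSide v e ς g = 1 ∨ sigSide v e ς g = -1 := by
  intro g
  unfold sigSide
  split
  · exact hς
  · exact sgn_vals v g e

/-- the combinatorial characterization of adjacency in the cascade graph -/
lemma adj_iff (hn : 4 ≤ n) (hv : ConvexCCW v) (hM : IsNCMatching v M)
    (A B : ↥(fullDiags M)) :
    (cascadeGraph v (fullPoly v) (fullDiags M)).Adj A B
      ↔ A ≠ B ∧ (∀ g ∈ fullDiags M, g ≠ A.1 → g ≠ B.1 → sgn v g A.1 = sgn v g B.1)
        ∧ Bset v (fullDiags M) (sigSide v A.1 (sgn v A.1 B.1)) = {A.1, B.1} := by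
  have hab' : A ≠ B ↔ A.1 ≠ B.1 := by
    constructor
    · intro h hh; exact h (Subtype.ext hh)
    · intro h hh; exact h (congrArg Subtype.val hh)
  constructor
  · intro h
    obtain ⟨hAB, R, ⟨hreg, hnc⟩, hsa, hsb⟩ := h
    obtain ⟨σ, hσ, hcne, rfl⟩ := (region_iff hn hv hM R).1 hreg
    have hbd := boundDiags_Kc hn hv hM σ hσ hcne
    have hA : A.1 ∈ Bset v (fullDiags M) σ := by rw [← hbd]; exact ⟨A.2, hsa⟩
    have hB : B.1 ∈ Bset v (fullDiags M) σ := by rw [← hbd]; exact ⟨B.2, hsb⟩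
    have hab : A.1 ≠ B.1 := hab'.1 hAB
    have hsub : {A.1, B.1} ⊆ Bset v (fullDiags M) σ := by
      intro t ht
      rcases ht with rfl | rfl
      · exact hA
      · exact hB
    have heq : {A.1, B.1} = Bset v (fullDiags M) σ := by
      apply Set.eq_of_subset_of_ncard_le hsub
      rw [hbd] at hnc
      rw [hnc, Set.ncard_pair hab]
    refine ⟨hAB, ?_, ?_⟩
    · intro g hg hga hgb
      have h1 := hA.2 g hg hga
      have h2 := hB.2 g hg hgb
      rw [← h1, h2]
    · have hcongr : ∀ g ∈ fullDiags M, σ g = sigSide v A.1 (sgn v A.1 B.1) g := by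
        intro g hg
        unfold sigSide
        rcases eq_or_ne g A.1 with rfl | hga
        · rw [if_pos rfl]
          exact hB.2 _ hg hab
        · rw [if_neg hga]
          exact hA.2 g hg hga
      rw [← Bset_congr hcongr, ← heq]
  · rintro ⟨hAB, hcons, hBeq⟩
    have hab : A.1 ≠ B.1 := hab'.1 hAB
    set σ := sigSide v A.1 (sgn v A.1 B.1) with hσdef
    have hσ : ∀ g ∈ fullDiags M, σ g = 1 ∨ σ g = -1 :=
      fun g _ => sigSide_vals v A.1 (sgn_vals v A.1 B.1) g
    have hcne : (cell v (fullDiags M) σ).Nonempty :=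
      cell_perturb hn hv hM A.2 _ (sgn_vals v A.1 B.1)
    have hbd := boundDiags_Kc hn hv hM σ hσ hcne
    refine ⟨hAB, Kc v (fullDiags M) σ, ⟨?_, ?_⟩, ?_, ?_⟩
    · exact (region_iff hn hv hM _).2 ⟨σ, hσ, hcne, rfl⟩
    · rw [hbd, hBeq, Set.ncard_pair hab]
    · have : A.1 ∈ Bset v (fullDiags M) σ := by rw [hBeq]; exact Or.inl rfl
      rw [← hbd] at this
      exact this.2
    · have : B.1 ∈ Bset v (fullDiags M) σ := by rw [hBeq]; exact Or.inr rfl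
      rw [← hbd] at this
      exact this.2

/-- the set of diagonals strictly between two diagonals -/
def Zset (v : ZMod n → Pt) (D : Set (Sym2 (ZMod n))) (e f : Sym2 (ZMod n)) :
    Set (Sym2 (ZMod n)) :=
  {g ∈ D | g ≠ e ∧ g ≠ f ∧ sgn v g e ≠ sgn v g f}

lemma Zset_comm (v : ZMod n → Pt) (D : Set (Sym2 (ZMod n))) (e f : Sym2 (ZMod n)) :
    Zset v D e f = Zset v D f e := by
  unfold Zset
  ext g
  constructor <;> rintro ⟨hg, h1, h2, h3⟩ <;> exact ⟨hg, ‹_›, ‹_›, h3.symm⟩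

/-- two diagonals cannot mutually separate each other from a third -/
lemma sep_asymm (hn : 4 ≤ n) (hv : ConvexCCW v) (hM : IsNCMatching v M)
    {e f g : Sym2 (ZMod n)} (he : e ∈ fullDiags M) (hf : f ∈ fullDiags M)
    (hg : g ∈ fullDiags M) (hef : e ≠ f) (heg : e ≠ g) (hfg : f ≠ g)
    (h1 : sgn v e f ≠ sgn v e g) (h2 : sgn v f e ≠ sgn v f g) : False := by
  set x := midp v e with hx
  set y := midp v g with hy
  have hfx : 0 < sgn v f e * sf v f x :=
    sgn_mul_pos hn hv hM he hf (fun h => hef h.symm) (midp_mem_seg v e)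
  have hfy : 0 < sgn v f g * sf v f y :=
    sgn_mul_pos hn hv hM hg hf hfg (midp_mem_seg v g)
  have hopp : sf v f x * sf v f y < 0 := by
    rcases sgn_vals v f e with ha | ha <;> rcases sgn_vals v f g with hb | hb <;>
      rw [ha] at hfx <;> rw [hb] at hfy <;> first
      | nlinarith
      | (exfalso; apply h2; rw [ha, hb])
  obtain ⟨t, hticc, ht0, htpos⟩ := root_segment (f := sf v f)
    (fun hts p q => sf_affine v f hts p q) hopp
  set z := (1 - t) • x + t • y with hz
  have hzpoly : z ∈ fullPoly v := by
    apply (convex_convexHull ℝ _)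
      (pairSeg_subset_poly v e (midp_mem_seg v e))
      (pairSeg_subset_poly v g (midp_mem_seg v g))
      (by linarith [hticc.2]) hticc.1 (by ring)
  have hzseg : z ∈ pairSeg v f := sf_zero_mem hn hv hM hf hzpoly ht0
  have hez : 0 < sgn v e f * sf v e z :=
    sgn_mul_pos hn hv hM hf he hef hzseg
  have hval : sf v e z = t * sf v e y := by
    rw [hz, sf_affine v e (by ring), sf_zero_on_seg v e (midp_mem_seg v e)]
    ring
  have hey : 0 < sgn v e g * sf v e y :=
    sgn_mul_pos hn hv hM hg he heg (midp_mem_seg v g)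
  rw [hval] at hez
  rcases sgn_vals v e f with ha | ha <;> rcases sgn_vals v e g with hb | hb <;>
    rw [ha] at hez <;> rw [hb] at hey <;> first
    | nlinarith
    | (exact h1 (by rw [ha, hb]))

/-- betweenness shrinks the separation set -/
lemma between_subset (hn : 4 ≤ n) (hv : ConvexCCW v) (hM : IsNCMatching v M)
    {e f g : Sym2 (ZMod n)} (he : e ∈ fullDiags M) (hf : f ∈ fullDiags M)
    (hg : g ∈ fullDiags M) (hef : e ≠ f) (hge : g ≠ e) (hgf : g ≠ f)
    (hbet : sgn v g e ≠ sgn v g f) :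
    Zset v (fullDiags M) e g ⊆ Zset v (fullDiags M) e f \ {g} := by
  rintro h ⟨hh, hhe, hhg, hheg⟩
  have hhf : h ≠ f := by
    rintro rfl
    exact sep_asymm hn hv hM hg hh he hgf hge hhe hbet.symm hheg.symm
  have step2 : sgn v g h = sgn v g e := by
    by_contra hc
    exact sep_asymm hn hv hM hh hg he hhg hhe hge hheg.symm hc
  have step3 : sgn v g h ≠ sgn v g f := by rw [step2]; exact hbet
  have step4 : sgn v h g = sgn v h f := by
    by_contra hc
    exact sep_asymm hn hv hM hg hh hf hhg.symm hgf hhf step3 hc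
  have hfin : sgn v h e ≠ sgn v h f := by rw [← step4]; exact hheg
  refine ⟨⟨hh, hhe, hhf, hfin⟩, ?_⟩
  simp only [mem_singleton_iff]
  exact hhg

end BNC2
namespace BNC2
open BNC Set SimpleGraph

variable {n : ℕ} [NeZero n] {v : ZMod n → Pt} {M : Set (Sym2 (ZMod n))}

lemma walk_inv (hn : 4 ≤ n) (hv : ConvexCCW v) (hM : IsNCMatching v M)
    (X Y : ↥(fullDiags M)) (c : ℝ) :
    ∀ (u : ↥(fullDiags M)) (w : (cascadeGraph v (fullPoly v) (fullDiags M)).Walk u Y),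
      w.IsPath → X ∉ w.support → sgn v X.1 u.1 ≠ c → sgn v X.1 Y.1 ≠ c := by
  intro u w
  induction w with
  | nil => intro _ _ h; exact h
  | cons h w ih =>
    rename_i a b _
    intro hp hXs hsgn
    rw [SimpleGraph.Walk.cons_isPath_iff] at hp
    rw [SimpleGraph.Walk.support_cons, List.mem_cons] at hXs
    push_neg at hXs
    obtain ⟨hXa, hXw⟩ := hXs
    have hXb : X ≠ b := by
      intro hh
      exact hXw (hh ▸ SimpleGraph.Walk.start_mem_support w)
    obtain ⟨-, hcons, -⟩ := (adj_iff hn hv hM a b).1 h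
    have hstep := hcons X.1 X.2 (fun hh => hXa (Subtype.ext hh))
      (fun hh => hXb (Subtype.ext hh))
    exact ih hp.1 hXw (by rw [← hstep]; exact hsgn)

lemma no_reach (hn : 4 ≤ n) (hv : ConvexCCW v) (hM : IsNCMatching v M)
    {σ : Sym2 (ZMod n) → ℝ} {X Y : ↥(fullDiags M)} {z : Sym2 (ZMod n)}
    (hX : X.1 ∈ Bset v (fullDiags M) σ) (hY : Y.1 ∈ Bset v (fullDiags M) σ)
    (hz : z ∈ Bset v (fullDiags M) σ) (hXY : X.1 ≠ Y.1) (hzX : z ≠ X.1) (hzY : z ≠ Y.1) :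
    ¬ (cascadeGraph v (fullPoly v) (fullDiags M)).Reachable X Y := by
  intro hr
  classical
  obtain ⟨w0⟩ := hr
  obtain ⟨q, hq⟩ := w0.toPath
  have s_xy : σ X.1 = sgn v X.1 Y.1 := hY.2 X.1 X.2 hXY
  have s_xz : σ X.1 = sgn v X.1 z := hz.2 X.1 X.2 (fun h => hzX h.symm)
  cases q with
  | nil => exact hXY rfl
  | cons h q' =>
    rename_i u1
    rw [SimpleGraph.Walk.cons_isPath_iff] at hq
    obtain ⟨hq', hXsup⟩ := hq
    have hfirst : sgn v X.1 u1.1 ≠ σ X.1 := by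
      intro hcontra
      obtain ⟨hne2, hcons, hBeq⟩ := (adj_iff hn hv hM X u1).1 h
      have hcongr : ∀ g ∈ fullDiags M, sigSide v X.1 (sgn v X.1 u1.1) g = σ g := by
        intro g hg
        unfold sigSide
        rcases eq_or_ne g X.1 with rfl | hgx
        · rw [if_pos rfl, hcontra]
        · rw [if_neg hgx]
          exact (hX.2 g hg hgx).symm
      have hBeq2 : Bset v (fullDiags M) σ = {X.1, u1.1} := by
        rw [← Bset_congr hcongr, hBeq]
      have hy' : Y.1 ∈ ({X.1, u1.1} : Set (Sym2 (ZMod n))) := by rw [← hBeq2]; exact hY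
      have hz' : z ∈ ({X.1, u1.1} : Set (Sym2 (ZMod n))) := by rw [← hBeq2]; exact hz
      rcases hy' with h1 | h1
      · exact hXY h1.symm
      · rcases hz' with h2 | h2
        · exact hzX h2
        · rw [mem_singleton_iff] at h1 h2
          exact hzY (h2.trans h1.symm)
    exact walk_inv hn hv hM X Y (σ X.1) u1 q' hq' hXsup hfirst s_xy.symm

end BNC2

/-- No non-crossing matching has exactly two cascades. -/
theorem stmt6 (n : ℕ) [NeZero n] (hn : 4 ≤ n) (hEven : Even n)
    (v : ZMod n → BNC.Pt) (hv : BNC.ConvexCCW v) :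
    ∀ M : Set (Sym2 (ZMod n)), BNC.IsNCMatching v M →
      BNC.cascadeCount v (BNC.fullPoly v) (BNC.fullDiags M) ≠ 2 := by
  classical
  intro M hM hcc
  open BNC BNC2 SimpleGraph Set in
  set G := BNC.cascadeGraph v (BNC.fullPoly v) (BNC.fullDiags M) with hG
  have hcc' : Nat.card G.ConnectedComponent = 2 := hcc
  rw [Nat.card_eq_two_iff] at hcc'
  obtain ⟨c1, c2, hc12, huniv⟩ := hcc'
  obtain ⟨X1, hX1⟩ := c1.exists_rep
  obtain ⟨X2, hX2⟩ := c2.exists_rep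
  have hcomp2 : ∀ c : G.ConnectedComponent, c = c1 ∨ c = c2 := by
    intro c
    have : c ∈ ({c1, c2} : Set G.ConnectedComponent) := by rw [huniv]; trivial
    rcases this with h | h
    · exact Or.inl h
    · exact Or.inr h
  set Pset : Set (↥(BNC.fullDiags M) × ↥(BNC.fullDiags M)) :=
    {p | ¬ G.Reachable p.1 p.2} with hPset
  have hPne : Pset.Nonempty := by
    refine ⟨(X1, X2), fun hr => hc12 ?_⟩
    rw [← hX1, ← hX2]
    exact SimpleGraph.ConnectedComponent.sound hr
  obtain ⟨⟨E, F⟩, hEF, hmin⟩ := Set.exists_min_image Pset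
    (fun p => (BNC2.Zset v (BNC.fullDiags M) p.1.1 p.2.1).ncard) (Set.toFinite _) hPne
  have hnr : ¬ G.Reachable E F := hEF
  have hne : E.1 ≠ F.1 := by
    intro h
    exact hnr ((Subtype.ext h : E = F) ▸ SimpleGraph.Reachable.refl E)
  by_cases hZ : (BNC2.Zset v (BNC.fullDiags M) E.1 F.1).Nonempty
  · obtain ⟨g, hgD, hge, hgf, hbet⟩ := hZ
    set Gv : ↥(BNC.fullDiags M) := ⟨g, hgD⟩ with hGv
    have hsplit : ¬ G.Reachable E Gv ∨ ¬ G.Reachable Gv F := by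
      by_contra hc
      push_neg at hc
      exact hnr (hc.1.trans hc.2)
    rcases hsplit with hnr' | hnr'
    · have hsub := BNC2.between_subset hn hv hM E.2 F.2 hgD hne hge hgf hbet
      have hlt : (BNC2.Zset v (BNC.fullDiags M) E.1 g).ncard
          < (BNC2.Zset v (BNC.fullDiags M) E.1 F.1).ncard := by
        refine Set.ncard_lt_ncard ?_ (Set.toFinite _)
        constructor
        · exact hsub.trans diff_subset
        · intro hsup
          have hmem : g ∈ BNC2.Zset v (BNC.fullDiags M) E.1 g :=
            hsup ⟨hgD, hge, hgf, hbet⟩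
          exact hmem.2.2.1 rfl
      have := hmin (E, Gv) hnr'
      simp only at this
      exact absurd this (not_le.2 hlt)
    · have hsub := BNC2.between_subset hn hv hM F.2 E.2 hgD (fun h => hne h.symm)
        hgf hge hbet.symm
      have hlt : (BNC2.Zset v (BNC.fullDiags M) g F.1).ncard
          < (BNC2.Zset v (BNC.fullDiags M) E.1 F.1).ncard := by
        rw [BNC2.Zset_comm v _ g F.1, BNC2.Zset_comm v _ E.1 F.1]
        refine Set.ncard_lt_ncard ?_ (Set.toFinite _)
        constructor
        · exact hsub.trans diff_subset
        · intro hsup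
          have hmem : g ∈ BNC2.Zset v (BNC.fullDiags M) F.1 g :=
            hsup ⟨hgD, hgf, hge, hbet.symm⟩
          exact hmem.2.2.1 rfl
      have := hmin (Gv, F) hnr'
      simp only at this
      exact absurd this (not_le.2 hlt)
  · have hZ' : ∀ g ∈ BNC.fullDiags M, g ≠ E.1 → g ≠ F.1 → BNC2.sgn v g E.1 = BNC2.sgn v g F.1 := by
      intro g hg h1 h2
      by_contra hc
      exact hZ ⟨g, hg, h1, h2, hc⟩
    have hnadj : ¬ G.Adj E F := fun hadj => hnr hadj.reachable
    set σ := BNC2.sigSide v E.1 (BNC2.sgn v E.1 F.1) with hσdef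
    have hE : E.1 ∈ BNC2.Bset v (BNC.fullDiags M) σ := by
      refine ⟨E.2, fun g hg hge => ?_⟩
      rw [hσdef]
      unfold BNC2.sigSide
      rw [if_neg hge]
    have hF : F.1 ∈ BNC2.Bset v (BNC.fullDiags M) σ := by
      refine ⟨F.2, fun g hg hgf => ?_⟩
      rw [hσdef]
      unfold BNC2.sigSide
      rcases eq_or_ne g E.1 with rfl | hge
      · rw [if_pos rfl]
      · rw [if_neg hge]
        exact hZ' g hg hge hgf
    have hEneF : E ≠ F := fun h => hne (congrArg Subtype.val h)
    have hBne : BNC2.Bset v (BNC.fullDiags M) σ ≠ {E.1, F.1} := by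
      intro hBeq
      exact hnadj ((BNC2.adj_iff hn hv hM E F).2 ⟨hEneF, hZ', hBeq⟩)
    have hsub : ({E.1, F.1} : Set (Sym2 (ZMod n))) ⊆ BNC2.Bset v (BNC.fullDiags M) σ := by
      intro t ht
      rcases ht with h | h
      · exact h ▸ hE
      · rw [mem_singleton_iff] at h
        exact h ▸ hF
    obtain ⟨z, hzB, hz12⟩ : ∃ z ∈ BNC2.Bset v (BNC.fullDiags M) σ,
        z ∉ ({E.1, F.1} : Set (Sym2 (ZMod n))) := by
      by_contra hc
      push_neg at hc
      exact hBne (Set.Subset.antisymm hc hsub)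
    have hzE : z ≠ E.1 := fun h => hz12 (Or.inl h)
    have hzF : z ≠ F.1 := fun h => hz12 (Or.inr h)
    set Zv : ↥(BNC.fullDiags M) := ⟨z, hzB.1⟩ with hZv
    have hnr1 : ¬ G.Reachable E Zv :=
      BNC2.no_reach hn hv hM hE hzB hF hzE.symm (fun h => hne h.symm) hzF.symm
      -- X := E, Y := Zv, z := F.1 : need hXY : E.1 ≠ z, hzX : F.1 ≠ E.1, hzY : F.1 ≠ z
    have hnr2 : ¬ G.Reachable F Zv :=
      BNC2.no_reach hn hv hM hF hzB hE hzF.symm hne hzE.symm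
    have p1 : G.connectedComponentMk E ≠ G.connectedComponentMk F :=
      fun h => hnr (SimpleGraph.ConnectedComponent.exact h)
    have p2 : G.connectedComponentMk E ≠ G.connectedComponentMk Zv :=
      fun h => hnr1 (SimpleGraph.ConnectedComponent.exact h)
    have p3 : G.connectedComponentMk F ≠ G.connectedComponentMk Zv :=
      fun h => hnr2 (SimpleGraph.ConnectedComponent.exact h)
    rcases hcomp2 (G.connectedComponentMk E) with h1 | h1 <;>
      rcases hcomp2 (G.connectedComponentMk F) with h2 | h2 <;>
      rcases hcomp2 (G.connectedComponentMk Zv) with h3 | h3 <;>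
      first
      | exact p1 (h1.trans h2.symm)
      | exact p2 (h1.trans h3.symm)
      | exact p3 (h2.trans h3.symm)
end
end

section
/- The minimum over all indices i of S(i+1, i) equals the minimum of bn(M) over all non-crossing matchings M of the full point set having at most one cascade. -/
noncomputable section

namespace BNC
namespace Aux

lemma cross_sub_left (u w b : Pt) : cross (u - b) (w - b) =
    (u 0 - b 0) * (w 1 - b 1) - (u 1 - b 1) * (w 0 - b 0) := by
  simp [cross]

/-- cyclic invariance of the triple determinant -/
lemma tri_cyc (p q r : Pt) : cross (q - p) (r - p) = cross (r - q) (p - q) := by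
  simp only [cross_sub_left]; ring

/-- Grassmann–Plücker in 2D -/
lemma gp (w p q r : Pt) :
    cross w q * cross p r = cross w p * cross q r + cross w r * cross p q := by
  simp only [cross]; ring

/-- transitivity of cross-positivity in an open halfplane -/
lemma cross_trans {w p q r : Pt} (h1 : 0 < cross w p) (h2 : 0 < cross w q)
    (h3 : 0 < cross w r) (hpq : 0 < cross p q) (hqr : 0 < cross q r) :
    0 < cross p r := by
  have := gp w p q r
  nlinarith


variable {n : ℕ} [NeZero n] {v : ZMod n → Pt} {M : Set (Sym2 (ZMod n))}

lemma hne_lem (a : ZMod n) (s t : ℕ) (hs : s < n) (ht : t < n) (hst : s ≠ t) :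
    a + (s : ZMod n) ≠ a + (t : ZMod n) := by
  intro h
  have h2 := add_left_cancel h
  have := (ZMod.natCast_eq_natCast_iff s t n).mp h2
  rw [Nat.ModEq, Nat.mod_eq_of_lt hs, Nat.mod_eq_of_lt ht] at this
  exact hst this

/-- consecutive orientation: D(a, a+s, a+s+1) > 0 -/
lemma fact2 (hv : ConvexCCW v) (a : ZMod n) (s : ℕ) (hs : 0 < s) (hsn : s + 1 < n) :
    0 < cross (v (a + (s : ZMod n)) - v a) (v (a + ((s+1 : ℕ) : ZMod n)) - v a) := by
  have key := hv (a + (s : ZMod n)) a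
    (by
      have := hne_lem a s 0 (by omega) (by omega) (by omega)
      simpa using this.symm)
    (by
      have h1 : a + (s : ZMod n) + 1 = a + ((s+1 : ℕ) : ZMod n) := by push_cast; ring
      rw [h1]
      have := hne_lem a (s+1) 0 (by omega) (by omega) (by omega)
      simpa using this.symm)
  have hc : a + (s : ZMod n) + 1 = a + ((s+1 : ℕ) : ZMod n) := by push_cast; ring
  rw [hc] at key
  rw [tri_cyc]
  exact key

/-- halfplane: D(a, a+1, a+t) > 0 for 2 ≤ t < n -/
lemma fact1 (hv : ConvexCCW v) (a : ZMod n) (t : ℕ) (h2 : 2 ≤ t) (hn2 : t < n) :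
    0 < cross (v (a + ((1:ℕ) : ZMod n)) - v a) (v (a + (t : ZMod n)) - v a) := by
  have key := hv a (a + (t : ZMod n))
    (by have := hne_lem a t 0 hn2 (by omega) (by omega); simpa using this)
    (by
      have := hne_lem a t 1 hn2 (by omega) (by omega)
      intro h; apply this; rw [h]; push_cast; ring)
  have hc : a + 1 = a + ((1:ℕ) : ZMod n) := by push_cast; ring
  rwa [hc] at key

/-- The fundamental triple-orientation lemma. -/
lemma tri (hv : ConvexCCW v) (a : ZMod n) (s t : ℕ) (hs : 0 < s) (hst : s < t) (htn : t < n) :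
    0 < cross (v (a + (s : ZMod n)) - v a) (v (a + (t : ZMod n)) - v a) := by
  rcases eq_or_lt_of_le (show 1 ≤ s from hs) with h1 | h1
  · subst h1
    exact fact1 hv a t (by omega) htn
  · -- 2 ≤ s
    revert htn
    induction t, hst using Nat.le_induction with
    | base =>
      intro htn
      exact fact2 hv a s (by omega) htn
    | succ t ht ih =>
      intro htn
      have hst' : s < t := by omega
      have ht' : t < n := by omega
      have ihh := ih ht'
      have hcons := fact2 hv a t (by omega) (by omega)
      have hw1s : 0 < cross (v (a + ((1:ℕ):ZMod n)) - v a) (v (a + (s:ZMod n)) - v a) :=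
        fact1 hv a s (by omega) (by omega)
      have hw1t : 0 < cross (v (a + ((1:ℕ):ZMod n)) - v a) (v (a + (t:ZMod n)) - v a) :=
        fact1 hv a t (by omega) (by omega)
      have hw1t1 : 0 < cross (v (a + ((1:ℕ):ZMod n)) - v a) (v (a + ((t+1:ℕ):ZMod n)) - v a) :=
        fact1 hv a (t+1) (by omega) (by omega)
      exact cross_trans hw1s hw1t hw1t1 ihh hcons


/-- cross of a fixed vector with an affine path is affine -/
lemma cross_affine (u b x y : Pt) (t : ℝ) :
    cross u (x + t • (y - x) - b) = cross u (x - b) + t * (cross u (y - b) - cross u (x - b)) := by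
  simp only [cross]
  simp only [PiLp.add_apply, PiLp.sub_apply, PiLp.smul_apply, smul_eq_mul]
  ring

lemma cross_convex (u b x y : Pt) (s t : ℝ) (hst : s + t = 1) :
    cross u (s • x + t • y - b) = s * cross u (x - b) + t * cross u (y - b) := by
  have hs : s = 1 - t := by linarith
  subst hs
  simp only [cross, PiLp.add_apply, PiLp.sub_apply, PiLp.smul_apply, smul_eq_mul]
  ring

/-- If the four endpoints are strictly separated by each other's lines, the segments meet. -/
lemma segments_cross {p1 p2 q1 q2 : Pt}
    (h1 : cross (p2 - p1) (q1 - p1) < 0) (h2 : 0 < cross (p2 - p1) (q2 - p1))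
    (h3 : 0 < cross (q2 - q1) (p1 - q1)) (h4 : cross (q2 - q1) (p2 - q1) < 0) :
    ¬ Disjoint (segment ℝ p1 p2) (segment ℝ q1 q2) := by
  have hden : 0 < cross (p2 - p1) (q2 - p1) - cross (p2 - p1) (q1 - p1) := by linarith
  set t : ℝ := (0 - cross (p2 - p1) (q1 - p1)) /
      (cross (p2 - p1) (q2 - p1) - cross (p2 - p1) (q1 - p1)) with hts
  have ht0 : 0 < t := div_pos (by linarith) hden
  have ht1 : t < 1 := by
    rw [div_lt_one hden]; linarith
  set z : Pt := q1 + t • (q2 - q1) with hz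
  have hzq : z ∈ segment ℝ q1 q2 := by
    rw [segment_eq_image']
    exact ⟨t, ⟨le_of_lt ht0, le_of_lt ht1⟩, rfl⟩
  have hfz : cross (p2 - p1) (z - p1) = 0 := by
    rw [hz, cross_affine, hts]
    field_simp
    ring
  obtain ⟨k, hk⟩ : ∃ k : ℝ, z - p1 = k • (p2 - p1) := by
    have hcz : (p2 - p1) 0 * (z - p1) 1 = (p2 - p1) 1 * (z - p1) 0 := by
      simp only [cross] at hfz; linarith
    have hden2 : 0 < ((p2 - p1) 0) ^ 2 + ((p2 - p1) 1) ^ 2 := by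
      by_contra hc
      push_neg at hc
      have h00 : (p2 - p1) 0 = 0 := by nlinarith
      have h11 : (p2 - p1) 1 = 0 := by nlinarith
      simp only [cross, h00, h11] at h1 h2
      linarith
    refine ⟨((z - p1) 0 * (p2 - p1) 0 + (z - p1) 1 * (p2 - p1) 1) /
      (((p2 - p1) 0) ^ 2 + ((p2 - p1) 1) ^ 2), ?_⟩
    ext i
    fin_cases i <;>
      simp only [Fin.zero_eta, Fin.mk_one, PiLp.smul_apply, smul_eq_mul] <;>
      rw [div_mul_eq_mul_div, eq_div_iff (ne_of_gt hden2)]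
    · linear_combination (-(p2 - p1) 1) * hcz
    · linear_combination ((p2 - p1) 0) * hcz
  have hzp : z = p1 + k • (p2 - p1) := by
    rw [← hk]; abel
  have hgz : cross (q2 - q1) (z - q1) = 0 := by
    rw [hz, cross_affine]
    simp only [cross, PiLp.sub_apply]
    ring
  have hgk : cross (q2 - q1) (z - q1) =
      cross (q2 - q1) (p1 - q1) + k * (cross (q2 - q1) (p2 - q1) - cross (q2 - q1) (p1 - q1)) := by
    rw [hzp, cross_affine]
  rw [hgz] at hgk
  have hk0 : 0 < k := by nlinarith
  have hk1 : k < 1 := by nlinarith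
  have hzpse : z ∈ segment ℝ p1 p2 := by
    rw [segment_eq_image']
    exact ⟨k, ⟨le_of_lt hk0, le_of_lt hk1⟩, hzp.symm⟩
  intro hdis
  exact (hdis.ne_of_mem hzpse hzq) rfl


lemma cross_smul_right (u w : Pt) (k : ℝ) : cross u (k • w) = k * cross u w := by
  simp only [cross, PiLp.smul_apply, smul_eq_mul]; ring

lemma cross_self (u : Pt) : cross u u = 0 := by simp [cross]; ring

lemma collinear_of_cross_eq_zero {u w : Pt} (hu : u ≠ 0) (h : cross u w = 0) :
    ∃ k : ℝ, w = k • u := by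
  have hcz : u 0 * w 1 = u 1 * w 0 := by simp only [cross] at h; linarith
  have hden2 : 0 < (u 0) ^ 2 + (u 1) ^ 2 := by
    by_contra hc
    push_neg at hc
    have h00 : u 0 = 0 := by nlinarith
    have h11 : u 1 = 0 := by nlinarith
    apply hu
    ext i
    fin_cases i <;> simp [h00, h11]
  refine ⟨(w 0 * u 0 + w 1 * u 1) / ((u 0) ^ 2 + (u 1) ^ 2), ?_⟩
  ext i
  fin_cases i <;>
    simp only [Fin.zero_eta, Fin.mk_one, PiLp.smul_apply, smul_eq_mul] <;>
    rw [div_mul_eq_mul_div, eq_div_iff (ne_of_gt hden2)]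
  · linear_combination (-(u 1)) * hcz
  · linear_combination (u 0) * hcz

variable {n : ℕ} [NeZero n] {v : ZMod n → Pt} {M : Set (Sym2 (ZMod n))}

/-- every hull point is weakly left of every edge -/
lemma halfplane_hull (hv : ConvexCCW v) (a : ZMod n) :
    ∀ P ∈ convexHull ℝ (Set.range v), 0 ≤ cross (v (a + 1) - v a) (P - v a) := by
  intro P hP
  have hconv : Convex ℝ {P : Pt | 0 ≤ cross (v (a + 1) - v a) (P - v a)} := by
    intro x hx y hy s t hs ht hst
    simp only [Set.mem_setOf_eq] at hx hy ⊢
    rw [cross_convex _ _ _ _ _ _ hst]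
    positivity
  have hsub : Set.range v ⊆ {P : Pt | 0 ≤ cross (v (a + 1) - v a) (P - v a)} := by
    rintro _ ⟨j, rfl⟩
    simp only [Set.mem_setOf_eq]
    by_cases hj1 : j = a
    · subst hj1; simp [cross]
    by_cases hj2 : j = a + 1
    · subst hj2; rw [cross_self]
    exact le_of_lt (hv a j hj1 hj2)
  exact convexHull_min hsub hconv hP

/-- a hull point on the line of a diagonal lies on the diagonal segment -/
lemma seg_of_hull_on_line (hv : ConvexCCW v) {a b : ZMod n}
    (hab : b ≠ a) (hba : b ≠ a + 1) (hab2 : a ≠ b + 1)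
    {P : Pt} (hP : P ∈ convexHull ℝ (Set.range v))
    (hf : cross (v b - v a) (P - v a) = 0) :
    P ∈ segment ℝ (v a) (v b) := by
  have hc1 : 0 < cross (v (a + 1) - v a) (v b - v a) := hv a b hab hba
  have hc2 : 0 < cross (v (b + 1) - v b) (v a - v b) :=
    hv b a (fun h => hab h.symm) hab2
  have hu : v b - v a ≠ 0 := by
    intro h
    rw [h] at hc1
    simp [cross] at hc1
  obtain ⟨k, hk⟩ := collinear_of_cross_eq_zero hu hf
  have hg1 := halfplane_hull hv a P hP
  rw [hk, cross_smul_right] at hg1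
  have hk0 : 0 ≤ k := nonneg_of_mul_nonneg_right (by linarith [hg1] : 0 ≤ cross (v (a + 1) - v a) (v b - v a) * k) hc1
  have hg2 := halfplane_hull hv b P hP
  have hPb : P - v b = (k - 1) • (v b - v a) := by
    have : P - v b = (P - v a) - (v b - v a) := by abel
    rw [this, hk, sub_smul, one_smul]
  rw [hPb, cross_smul_right] at hg2
  have hc2' : cross (v (b + 1) - v b) (v b - v a) = - cross (v (b + 1) - v b) (v a - v b) := by
    have : v a - v b = -(v b - v a) := by abel
    rw [this]
    simp [cross]
    ring
  rw [hc2'] at hg2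
  have hk1 : k ≤ 1 := by nlinarith
  rw [segment_eq_image']
  refine ⟨k, ⟨hk0, hk1⟩, ?_⟩
  show v a + k • (v b - v a) = P
  rw [← hk]
  abel

lemma arc_top (i : ZMod n) : arc (i + 1) i = Finset.univ := by
  have hn : 0 < n := Nat.pos_of_ne_zero (NeZero.ne n)
  have h1 : i - (i + 1) = (-1 : ZMod n) := by ring
  have h2 : ((-1 : ZMod n)).val = n - 1 := by
    have hc : (-1 : ZMod n) = ((n - 1 : ℕ) : ZMod n) := by
      rw [Nat.cast_sub hn, ZMod.natCast_self, Nat.cast_one]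
      ring
    rw [hc, ZMod.val_cast_of_lt (by omega)]
  ext z
  simp only [arc, h1, h2, Finset.mem_image, Finset.mem_range, Finset.mem_univ, iff_true]
  refine ⟨(z - (i + 1)).val, ⟨by have := ZMod.val_lt (z - (i + 1)); omega, ?_⟩⟩
  rw [ZMod.natCast_rightInverse (z - (i + 1))]
  ring

lemma pairSeg_mk (a b : ZMod n) : pairSeg v s(a, b) = segment ℝ (v a) (v b) := rfl

lemma pairDist_mk (a b : ZMod n) : pairDist v s(a, b) = dist (v a) (v b) := rfl

lemma arcDiag_top (i : ZMod n) (e : Sym2 (ZMod n)) : ArcDiag (i + 1) i e ↔ ¬ IsPolyEdge e := by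
  constructor
  · rintro ⟨h1, h2⟩ ⟨k, hk⟩
    exact h2 k (by simp [arc_top]) (by simp [arc_top]) hk
  · intro h
    refine ⟨fun hc => h ⟨i, by rw [hc, Sym2.eq_swap]⟩, fun k _ _ hc => h ⟨k, hc⟩⟩

lemma arcDiags_top (i : ZMod n) (M : Set (Sym2 (ZMod n))) :
    arcDiags (i + 1) i M = fullDiags M := by
  ext e
  simp only [arcDiags, fullDiags, Set.mem_setOf_eq, arcDiag_top]

lemma arcPoly_top (i : ZMod n) : arcPoly v (i + 1) i = fullPoly v := by
  simp only [arcPoly, fullPoly, arc_top, Finset.coe_univ, Set.image_univ]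

lemma matchingOn_top (i : ZMod n) (M : Set (Sym2 (ZMod n))) :
    IsMatchingOn (↑(arc (i + 1) i) : Set (ZMod n)) M ↔ IsMatchingOn Set.univ M := by
  rw [arc_top, Finset.coe_univ]

lemma cross_antisymm (u w : Pt) : cross u w = - cross w u := by simp [cross]; ring

lemma continuous_crossline (u b : Pt) : Continuous (fun P : Pt => cross u (P - b)) := by
  have h : (fun P : Pt => cross u (P - b)) =
      fun P : Pt => u 0 * (P 1 - b 1) - u 1 * (P 0 - b 0) := by
    funext P; simp [cross]
  rw [h]; fun_prop

def dval {n : ℕ} [NeZero n] : Sym2 (ZMod n) → ℕ :=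
  Sym2.lift ⟨fun a b => min ((b - a).val) ((a - b).val), fun a b => min_comm _ _⟩

lemma dval_mk (a b : ZMod n) : dval s(a, b) = min ((b - a).val) ((a - b).val) := rfl

lemma val_offset (a c : ZMod n) : c = a + (((c - a).val : ℕ) : ZMod n) := by
  rw [ZMod.natCast_rightInverse (c - a)]; ring

lemma val_zero_iff (a c : ZMod n) : (c - a).val = 0 ↔ c = a := by
  rw [ZMod.val_eq_zero, sub_eq_zero]

/-- The key geometric lemma: M has a non-crossed polygon edge region. -/
lemma key (hv : ConvexCCW v) (hn : 4 ≤ n) {M : Set (Sym2 (ZMod n))}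
    (hM : IsNCMatching v M) {a b : ZMod n} (hd : s(a, b) ∈ fullDiags M)
    (hmin : ∀ e ∈ fullDiags M, dval (s(a, b) : Sym2 (ZMod n)) ≤ dval e)
    (hle : (b - a).val ≤ (a - b).val) :
    ∀ R : Set Pt, IsRegion v (fullPoly v) (fullDiags M) R →
      segment ℝ (v (a + 1)) (v a) ⊆ frontier R →
      (boundDiags v (fullPoly v) (fullDiags M) R).ncard ≤ 1 := by
  obtain ⟨hMuniv, hNC⟩ := hM
  have hdM : s(a, b) ∈ M := hd.1
  set δ : ℕ := (b - a).val with hδdef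
  have hab : a ≠ b := by
    intro h
    exact hMuniv.1 _ hdM (by rw [h, Sym2.mk_isDiag_iff])
  have hnpe : ¬ IsPolyEdge (s(a, b) : Sym2 (ZMod n)) := hd.2
  have hba1 : b ≠ a + 1 := fun h => hnpe ⟨a, by rw [h]⟩
  have hab1 : a ≠ b + 1 := fun h => hnpe ⟨b, by rw [Sym2.eq_swap, h]⟩
  have hδn : δ < n := ZMod.val_lt _
  have hδ0 : δ ≠ 0 := fun h => hab ((val_zero_iff a b).mp h).symm
  have hδ1 : δ ≠ 1 := by
    intro h
    apply hba1
    have := val_offset a b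
    rw [← hδdef, h] at this
    simpa using this
  have hδn1 : δ ≠ n - 1 := by
    intro h
    apply hab1
    have hb := val_offset a b
    rw [← hδdef, h] at hb
    have : b + 1 = a + ((n - 1 : ℕ) : ZMod n) + 1 := by rw [← hb]
    rw [this]
    have : ((n - 1 : ℕ) : ZMod n) + 1 = ((n : ℕ) : ZMod n) := by
      push_cast [Nat.cast_sub (by omega : 1 ≤ n)]
      ring
    rw [add_assoc, this, ZMod.natCast_self, add_zero]
  have hδ2 : 2 ≤ δ := by omega
  have hδn2 : δ ≤ n - 2 := by omega
  have hdvald : dval (s(a, b) : Sym2 (ZMod n)) = δ := by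
    rw [dval_mk]; exact min_eq_left hle
  have hb_eq : b = a + ((δ : ℕ) : ZMod n) := val_offset a b
  -- the key claim: every other diagonal has both endpoints beyond b
  have claim : ∀ c x : ZMod n, s(c, x) ∈ fullDiags M → s(c, x) ≠ s(a, b) →
      δ < (c - a).val := by
    intro c x hcx hnee
    set s : ℕ := (c - a).val with hsdef
    set u : ℕ := (x - a).val with hudef
    have hcxM : s(c, x) ∈ M := hcx.1
    have hdis : Disjoint (segment ℝ (v a) (v b)) (segment ℝ (v c) (v x)) := by
      have := hNC _ hdM _ hcxM (fun h => hnee h.symm)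
      rwa [pairSeg_mk, pairSeg_mk] at this
    have hca : c ≠ a := by
      rintro rfl
      exact (hdis.ne_of_mem (left_mem_segment ℝ _ _) (left_mem_segment ℝ _ _)) rfl
    have hcb : c ≠ b := by
      rintro rfl
      exact (hdis.ne_of_mem (right_mem_segment ℝ _ _) (left_mem_segment ℝ _ _)) rfl
    have hxa : x ≠ a := by
      rintro rfl
      exact (hdis.ne_of_mem (left_mem_segment ℝ _ _) (right_mem_segment ℝ _ _)) rfl
    have hxb : x ≠ b := by
      rintro rfl
      exact (hdis.ne_of_mem (right_mem_segment ℝ _ _) (right_mem_segment ℝ _ _)) rfl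
    have hcxne : c ≠ x := by
      intro h
      exact hMuniv.1 _ hcxM (by rw [h, Sym2.mk_isDiag_iff])
    have hc_eq : c = a + ((s : ℕ) : ZMod n) := val_offset a c
    have hx_eq : x = a + ((u : ℕ) : ZMod n) := val_offset a x
    have hs0 : s ≠ 0 := fun h => hca ((val_zero_iff a c).mp h)
    have hu0 : u ≠ 0 := fun h => hxa ((val_zero_iff a x).mp h)
    have hsn : s < n := ZMod.val_lt _
    have hun : u < n := ZMod.val_lt _
    have hsδ : s ≠ δ := by
      intro h
      apply hcb
      rw [hc_eq, h, ← hb_eq]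
    have huδ : u ≠ δ := by
      intro h
      apply hxb
      rw [hx_eq, h, ← hb_eq]
    have hsu : s ≠ u := by
      intro h
      apply hcxne
      rw [hc_eq, hx_eq, h]
    -- show δ < s
    by_contra hcon
    push_neg at hcon
    -- so 0 < s < δ
    have hs_lt : s < δ := by omega
    have hs_pos : 0 < s := by omega
    -- the partner x cannot be inside the short arc either (minimality),
    -- nor outside (crossing); contradiction
    rcases lt_or_gt_of_ne huδ with hu_lt | hu_gt
    · -- both endpoints in the short arc: contradicts minimality
      have hmm := hmin _ hcx
      rw [hdvald] at hmm
      rcases lt_or_gt_of_ne hsu with h1 | h1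
      · -- s < u : (x - c).val = u - s
        have hxc : x - c = (((u - s : ℕ)) : ZMod n) := by
          rw [hc_eq, hx_eq]
          push_cast [Nat.cast_sub (by omega : s ≤ u)]
          ring
        have : (x - c).val = u - s := by rw [hxc, ZMod.val_cast_of_lt (by omega)]
        have h2 : dval (s(c, x) : Sym2 (ZMod n)) ≤ u - s := by
          rw [dval_mk]
          exact le_trans (min_le_left _ _) (le_of_eq this)
        omega
      · -- u < s : (c - x).val = s - u
        have hcxv : c - x = (((s - u : ℕ)) : ZMod n) := by
          rw [hc_eq, hx_eq]
          push_cast [Nat.cast_sub (by omega : u ≤ s)]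
          ring
        have : (c - x).val = s - u := by rw [hcxv, ZMod.val_cast_of_lt (by omega)]
        have h2 : dval (s(c, x) : Sym2 (ZMod n)) ≤ s - u := by
          rw [dval_mk]
          exact le_trans (min_le_right _ _) (le_of_eq this)
        omega
    · -- x beyond b : segments cross
      have hx_eq2 : x = c + (((u - s : ℕ)) : ZMod n) := by
        rw [hc_eq, hx_eq]
        push_cast [Nat.cast_sub (by omega : s ≤ u)]
        ring
      have ha_eq2 : a = c + (((n - s : ℕ)) : ZMod n) := by
        rw [hc_eq]
        push_cast [Nat.cast_sub (by omega : s ≤ n)]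
        rw [ZMod.natCast_self]
        ring
      have hb_eq2 : b = c + (((δ - s : ℕ)) : ZMod n) := by
        rw [hc_eq, hb_eq]
        push_cast [Nat.cast_sub (by omega : s ≤ δ)]
        ring
      have h1 : cross (v b - v a) (v c - v a) < 0 := by
        have := tri hv a s δ (by omega) hs_lt (by omega)
        rw [← hc_eq, ← hb_eq] at this
        rw [cross_antisymm]
        linarith
      have h2 : 0 < cross (v b - v a) (v x - v a) := by
        have := tri hv a δ u (by omega) (by omega) (by omega)
        rwa [← hx_eq, ← hb_eq] at this
      have h3 : 0 < cross (v x - v c) (v a - v c) := by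
        have := tri hv c (u - s) (n - s) (by omega) (by omega) (by omega)
        rwa [← hx_eq2, ← ha_eq2] at this
      have h4 : cross (v x - v c) (v b - v c) < 0 := by
        have := tri hv c (δ - s) (u - s) (by omega) (by omega) (by omega)
        rw [← hx_eq2, ← hb_eq2] at this
        rw [cross_antisymm]
        linarith
      exact (segments_cross h1 h2 h3 h4) hdis
  -- now the region argument
  intro R hR hseg
  obtain ⟨x0, hx0, hRdef⟩ := hR
  set U : Set Pt := regionSpace v (fullPoly v) (fullDiags M) with hU
  set C : Set Pt := connectedComponentIn U x0 with hC
  set f : Pt → ℝ := fun P => cross (v b - v a) (P - v a) with hf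
  have hfcont : Continuous f := continuous_crossline _ _
  have hfne : ∀ P ∈ U, f P ≠ 0 := by
    intro P hP h0
    have hPpoly : P ∈ convexHull ℝ (Set.range v) := interior_subset hP.1
    have hPseg : P ∈ segment ℝ (v a) (v b) :=
      seg_of_hull_on_line hv (fun h => hab h.symm) hba1 hab1 hPpoly h0
    apply hP.2
    exact Set.mem_biUnion hd (by rwa [pairSeg_mk])
  -- the midpoint of the edge (a, a+1)
  set m : Pt := v a + (2⁻¹ : ℝ) • (v (a + 1) - v a) with hm
  have hm_seg : m ∈ segment ℝ (v (a + 1)) (v a) := by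
    rw [segment_symm, segment_eq_image']
    exact ⟨2⁻¹, ⟨by norm_num, by norm_num⟩, rfl⟩
  have ha1b : 0 < cross (v (a + 1) - v a) (v b - v a) := hv a b (fun h => hab h.symm) hba1
  have hm_f : f m < 0 := by
    have hsub : m - v a = (2⁻¹ : ℝ) • (v (a + 1) - v a) := by rw [hm]; abel
    rw [hf]
    simp only
    rw [hsub, cross_smul_right, cross_antisymm]
    linarith
  have hmR : m ∈ closure C := by
    have h1 : m ∈ frontier R := hseg hm_seg
    rw [hRdef] at h1
    have h2 := frontier_subset_closure h1
    rwa [closure_closure] at h2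
  obtain ⟨y0, hy0f, hy0C⟩ : ∃ y0, f y0 < 0 ∧ y0 ∈ C := by
    have hopen : IsOpen (f ⁻¹' Set.Iio 0) := (isOpen_Iio).preimage hfcont
    have := (mem_closure_iff.mp hmR) _ hopen (by simpa using hm_f)
    obtain ⟨y0, hy1, hy2⟩ := this
    exact ⟨y0, by simpa using hy1, hy2⟩
  have hCU : C ⊆ U := connectedComponentIn_subset U x0
  have hneg : ∀ y ∈ C, f y < 0 := by
    intro y hy
    rcases lt_or_ge (f y) 0 with h | h
    · exact h
    exfalso
    have hy' : 0 < f y := lt_of_le_of_ne h (fun hh => hfne y (hCU hy) hh.symm)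
    have := (isPreconnected_connectedComponentIn (x := x0) (F := U)).intermediate_value
      hy0C hy hfcont.continuousOn
    have h0 : (0 : ℝ) ∈ Set.Icc (f y0) (f y) := ⟨le_of_lt hy0f, le_of_lt hy'⟩
    obtain ⟨z, hzC, hz0⟩ := this h0
    exact hfne z (hCU hzC) hz0
  have hclos : ∀ P ∈ closure C, f P ≤ 0 := by
    have hsub : C ⊆ {P : Pt | f P ≤ 0} := fun y hy => le_of_lt (hneg y hy)
    have hcl : IsClosed {P : Pt | f P ≤ 0} := isClosed_le hfcont continuous_const
    intro P hP
    exact closure_minimal hsub hcl hP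
  -- bound the boundary diagonals
  have hbound : boundDiags v (fullPoly v) (fullDiags M) R ⊆ {s(a, b)} := by
    intro e he
    obtain ⟨heD, hesub⟩ := he
    simp only [Set.mem_singleton_iff]
    by_contra hne
    obtain ⟨⟨c, x⟩, rfl⟩ := e.exists_rep
    have hclaim := claim c x heD hne
    have hu : (c - a).val < n := ZMod.val_lt _
    have hc_eq : c = a + (((c - a).val : ℕ) : ZMod n) := val_offset a c
    have hfc : 0 < f (v c) := by
      have := tri hv a δ ((c - a).val) (by omega) hclaim hu
      rw [← hc_eq, ← hb_eq] at this
      exact this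
    have hvc : v c ∈ frontier R := hesub (by rw [pairSeg_mk]; exact left_mem_segment ℝ _ _)
    rw [hRdef] at hvc
    have : v c ∈ closure C := by
      have h2 := frontier_subset_closure hvc
      rwa [closure_closure] at h2
    linarith [hclos _ this]
  calc (boundDiags v (fullPoly v) (fullDiags M) R).ncard
      ≤ ({s(a, b)} : Set (Sym2 (ZMod n))).ncard :=
        Set.ncard_le_ncard hbound (Set.finite_singleton _)
    _ = 1 := Set.ncard_singleton _

lemma adm_of_region_cond (hM : IsNCMatching v M)
    (hcas : cascadeCount v (fullPoly v) (fullDiags M) ≤ 1) (i : ZMod n)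
    (hreg : ∀ R : Set Pt, IsRegion v (fullPoly v) (fullDiags M) R →
      segment ℝ (v (i + 1)) (v i) ⊆ frontier R →
      (boundDiags v (fullPoly v) (fullDiags M) R).ncard ≤ 1) :
    Admissible v (i + 1) i M := by
  refine ⟨(matchingOn_top i M).mpr hM.1, hM.2, ?_, ?_⟩
  · rw [arcPoly_top, arcDiags_top]; exact hcas
  · intro R hR hseg
    rw [arcPoly_top, arcDiags_top] at hR ⊢
    exact hreg R hR hseg

lemma ncmatching_of_admissible {i : ZMod n} (hadm : Admissible v (i + 1) i M) :
    IsNCMatching v M ∧ cascadeCount v (fullPoly v) (fullDiags M) ≤ 1 := by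
  obtain ⟨h1, h2, h3, _⟩ := hadm
  rw [arcPoly_top, arcDiags_top] at h3
  exact ⟨⟨(matchingOn_top i M).mp h1, h2⟩, h3⟩

lemma exists_admissible (hv : ConvexCCW v) (hn : 4 ≤ n)
    (hM : IsNCMatching v M)
    (hcas : cascadeCount v (fullPoly v) (fullDiags M) ≤ 1) :
    ∃ i : ZMod n, Admissible v (i + 1) i M := by
  by_cases hD : fullDiags M = ∅
  · refine ⟨0, adm_of_region_cond hM hcas 0 ?_⟩
    intro R _ _
    have hbd : boundDiags v (fullPoly v) (fullDiags M) R = ∅ := by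
      rw [hD]
      ext e
      simp [boundDiags]
    simp [hbd]
  · obtain ⟨d, hdD, hmind⟩ := Set.exists_min_image (fullDiags M) dval (Set.toFinite _)
      (Set.nonempty_iff_ne_empty.mpr hD)
    obtain ⟨⟨a0, b0⟩, rfl⟩ := d.exists_rep
    rcases le_total ((b0 - a0).val) ((a0 - b0).val) with hor | hor
    · exact ⟨a0, adm_of_region_cond hM hcas a0 (key hv hn hM hdD hmind hor)⟩
    · refine ⟨b0, adm_of_region_cond hM hcas b0 (key hv hn hM ?_ ?_ hor)⟩
      · rwa [← Sym2.eq_swap]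
      · intro e he
        rw [Sym2.eq_swap]
        exact hmind e he

/-- the all-edges matching -/
def M0 (n : ℕ) : Set (Sym2 (ZMod n)) :=
  {e | ∃ m : ℕ, 2 * m + 1 < n ∧ e = s(((2 * m : ℕ) : ZMod n), ((2 * m + 1 : ℕ) : ZMod n))}

lemma cast_inj_lt (s t : ℕ) (hs : s < n) (ht : t < n) (h : (s : ZMod n) = (t : ZMod n)) :
    s = t := by
  have := (ZMod.natCast_eq_natCast_iff s t n).mp h
  rwa [Nat.ModEq, Nat.mod_eq_of_lt hs, Nat.mod_eq_of_lt ht] at this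

lemma M0_matching (hEven : Even n) : IsMatchingOn (Set.univ : Set (ZMod n)) (M0 n) := by
  have hn0 : 0 < n := Nat.pos_of_ne_zero (NeZero.ne n)
  obtain ⟨hf, hfn⟩ := hEven
  refine ⟨?_, fun e _ k _ => Set.mem_univ k, ?_⟩
  · rintro e ⟨m, hm, rfl⟩ hdiag
    rw [Sym2.mk_isDiag_iff] at hdiag
    have := cast_inj_lt _ _ (by omega) hm hdiag
    omega
  · intro k _
    have hq : k.val < n := ZMod.val_lt k
    have hk : k = ((k.val : ℕ) : ZMod n) := (ZMod.natCast_rightInverse k).symm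
    set q := k.val with hqdef
    by_cases hpar : q % 2 = 0
    · refine ⟨s(((2 * (q / 2) : ℕ) : ZMod n), ((2 * (q / 2) + 1 : ℕ) : ZMod n)),
        ⟨⟨q / 2, by omega, rfl⟩, ?_⟩, ?_⟩
      · rw [Sym2.mem_iff]
        left
        rw [hk]
        congr 1
        omega
      · rintro e' ⟨⟨m', hb', rfl⟩, hk'⟩
        rw [Sym2.mem_iff] at hk'
        rcases hk' with h | h
        · rw [hk] at h
          have := cast_inj_lt _ _ hq (by omega) h
          have hm : m' = q / 2 := by omega
          rw [hm]
        · rw [hk] at h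
          have := cast_inj_lt _ _ hq (by omega) h
          omega
    · refine ⟨s(((2 * (q / 2) : ℕ) : ZMod n), ((2 * (q / 2) + 1 : ℕ) : ZMod n)),
        ⟨⟨q / 2, by omega, rfl⟩, ?_⟩, ?_⟩
      · rw [Sym2.mem_iff]
        right
        rw [hk]
        congr 1
        omega
      · rintro e' ⟨⟨m', hb', rfl⟩, hk'⟩
        rw [Sym2.mem_iff] at hk'
        rcases hk' with h | h
        · rw [hk] at h
          have := cast_inj_lt _ _ hq (by omega) h
          omega
        · rw [hk] at h
          have := cast_inj_lt _ _ hq (by omega) h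
          have hm : m' = q / 2 := by omega
          rw [hm]

lemma M0_fullDiags : fullDiags (M0 n) = ∅ := by
  ext e
  simp only [fullDiags, Set.mem_setOf_eq, Set.mem_empty_iff_false, iff_false, not_and, not_not]
  rintro ⟨m, hm, rfl⟩
  refine ⟨((2 * m : ℕ) : ZMod n), ?_⟩
  congr 1
  push_cast
  ring

/-- two polygon edges with disjoint index pairs have disjoint segments -/
lemma edge_disjoint (hv : ConvexCCW v) (p q : ZMod n) (hqp : q ≠ p) (hqp1 : q ≠ p + 1)
    (hq1p : q + 1 ≠ p) (hq1p1 : q + 1 ≠ p + 1) :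
    Disjoint (segment ℝ (v p) (v (p + 1))) (segment ℝ (v q) (v (q + 1))) := by
  have hA : 0 < cross (v (p + 1) - v p) (v q - v p) := hv p q hqp hqp1
  have hB : 0 < cross (v (p + 1) - v p) (v (q + 1) - v p) := hv p (q + 1) hq1p hq1p1
  rw [Set.disjoint_left]
  intro z hz1 hz2
  rw [segment_eq_image'] at hz1 hz2
  obtain ⟨t1, ht1, rfl⟩ := hz1
  obtain ⟨t2, ht2, heq⟩ := hz2
  have heq' : v q + t2 • (v (q + 1) - v q) = v p + t1 • (v (p + 1) - v p) := heq
  have h1 : cross (v (p + 1) - v p) (v p + t1 • (v (p + 1) - v p) - v p) = 0 := by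
    rw [cross_affine]
    rw [sub_self]
    simp only [cross]
    simp only [PiLp.zero_apply, PiLp.sub_apply]
    ring
  have h2 : 0 < cross (v (p + 1) - v p) (v q + t2 • (v (q + 1) - v q) - v p) := by
    rw [cross_affine]
    obtain ⟨l2, r2⟩ := ht2
    nlinarith [mul_nonneg l2 (le_of_lt hB), mul_nonneg (by linarith : (0:ℝ) ≤ 1 - t2) (le_of_lt hA)]
  rw [heq'] at h2
  rw [h1] at h2
  exact lt_irrefl 0 h2

lemma M0_noncrossing (hv : ConvexCCW v) : NonCrossing v (M0 n) := by
  rintro e ⟨m, hm, rfl⟩ e' ⟨m', hm', rfl⟩ hne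
  have hmm : m ≠ m' := by
    rintro rfl
    exact hne rfl
  have hc1 : ((2 * m + 1 : ℕ) : ZMod n) = ((2 * m : ℕ) : ZMod n) + 1 := by push_cast; ring
  have hc1' : ((2 * m' + 1 : ℕ) : ZMod n) = ((2 * m' : ℕ) : ZMod n) + 1 := by push_cast; ring
  rw [pairSeg_mk, pairSeg_mk, hc1, hc1']
  apply edge_disjoint hv
  · intro h
    have := cast_inj_lt _ _ (by omega) (by omega) h
    omega
  · rw [← hc1]
    intro h
    have := cast_inj_lt _ _ (by omega) (by omega) h
    omega
  · rw [← hc1']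
    intro h
    have := cast_inj_lt _ _ (by omega) (by omega) h
    omega
  · rw [← hc1, ← hc1']
    intro h
    have := cast_inj_lt _ _ (by omega) (by omega) h
    omega

lemma cascadeCount_empty (P : Set Pt) :
    cascadeCount v P (∅ : Set (Sym2 (ZMod n))) = 0 := by
  haveI hie : IsEmpty ((∅ : Set (Sym2 (ZMod n))) : Type) := by
    simp only [Set.isEmpty_coe_sort]
  haveI : IsEmpty (cascadeGraph v P (∅ : Set (Sym2 (ZMod n)))).ConnectedComponent := by
    constructor
    intro cc
    induction cc using SimpleGraph.ConnectedComponent.ind with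
    | _ w => exact IsEmpty.false w
  exact Nat.card_of_isEmpty

lemma M0_ncmatching (hv : ConvexCCW v) (hEven : Even n) :
    IsNCMatching v (M0 n) ∧ cascadeCount v (fullPoly v) (fullDiags (M0 n)) ≤ 1 := by
  refine ⟨⟨M0_matching hEven, M0_noncrossing hv⟩, ?_⟩
  rw [M0_fullDiags, cascadeCount_empty]
  omega

lemma M0_admissible (hv : ConvexCCW v) (hEven : Even n) (i : ZMod n) :
    Admissible v (i + 1) i (M0 n) := by
  obtain ⟨hnc, hcas⟩ := M0_ncmatching hv hEven
  apply adm_of_region_cond hnc hcas i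
  intro R _ _
  have hbd : boundDiags v (fullPoly v) (fullDiags (M0 n)) R = ∅ := by
    rw [M0_fullDiags]
    ext e
    simp [boundDiags]
  simp [hbd]

lemma bnM_nonneg (hM : IsMatchingOn (Set.univ : Set (ZMod n)) M) : 0 ≤ bnM v M := by
  obtain ⟨e, ⟨heM, -⟩, -⟩ := hM.2.2 0 (Set.mem_univ 0)
  have hmem : pairDist v e ∈ pairDist v '' M := ⟨e, heM, rfl⟩
  have hbdd : BddAbove (pairDist v '' M) := (Set.toFinite M).image _ |>.bddAbove
  have h1 : pairDist v e ≤ bnM v M := le_csSup hbdd hmem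
  have h2 : 0 ≤ pairDist v e := by
    obtain ⟨⟨x, y⟩, rfl⟩ := e.exists_rep
    rw [pairDist_mk]
    exact dist_nonneg
  linarith

end Aux
end BNC

/-- The minimum over all `i` of `S(i+1, i)` equals the minimum bottleneck value
over all non-crossing matchings of the full point set with at most one cascade. -/
theorem stmt8 (n : ℕ) [NeZero n] (hn : 4 ≤ n) (hEven : Even n)
    (v : ZMod n → BNC.Pt) (hv : BNC.ConvexCCW v) :
    sInf {x : ℝ | ∃ i : ZMod n, x = BNC.S v (i + 1) i} =
      sInf {x : ℝ | ∃ M : Set (Sym2 (ZMod n)), BNC.IsNCMatching v M ∧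
        BNC.cascadeCount v (BNC.fullPoly v) (BNC.fullDiags M) ≤ 1 ∧ x = BNC.bnM v M} := by
  classical
  obtain ⟨hM0nc, hM0cas⟩ := BNC.Aux.M0_ncmatching hv hEven
  set T := {x : ℝ | ∃ M : Set (Sym2 (ZMod n)), BNC.IsNCMatching v M ∧
    BNC.cascadeCount v (BNC.fullPoly v) (BNC.fullDiags M) ≤ 1 ∧ x = BNC.bnM v M} with hT
  set L := {x : ℝ | ∃ i : ZMod n, x = BNC.S v (i + 1) i} with hL
  have hTne : T.Nonempty := ⟨BNC.bnM v (BNC.Aux.M0 n), BNC.Aux.M0 n, hM0nc, hM0cas, rfl⟩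
  have hLne : L.Nonempty := ⟨BNC.S v (0 + 1) 0, 0, rfl⟩
  have hTnonneg : ∀ x ∈ T, (0 : ℝ) ≤ x := by
    rintro x ⟨M, hM, -, rfl⟩
    exact BNC.Aux.bnM_nonneg hM.1
  have hTbdd : BddBelow T := ⟨0, fun x hx => hTnonneg x hx⟩
  have hsub : ∀ i : ZMod n, (BNC.bnM v '' {M | BNC.Admissible v (i + 1) i M}) ⊆ T := by
    rintro i x ⟨M, hadm, rfl⟩
    obtain ⟨hnc, hcas⟩ := BNC.Aux.ncmatching_of_admissible hadm
    exact ⟨M, hnc, hcas, rfl⟩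
  have hAdmne : ∀ i : ZMod n, (BNC.bnM v '' {M | BNC.Admissible v (i + 1) i M}).Nonempty :=
    fun i => ⟨BNC.bnM v (BNC.Aux.M0 n), BNC.Aux.M0 n, BNC.Aux.M0_admissible hv hEven i, rfl⟩
  have hLbdd : BddBelow L := by
    refine ⟨0, ?_⟩
    rintro x ⟨i, rfl⟩
    simp only [BNC.S]
    apply Real.sInf_nonneg
    intro y hy
    exact hTnonneg y (hsub i hy)
  apply le_antisymm
  · apply le_csInf hTne
    rintro x ⟨M, hM, hcas, rfl⟩
    obtain ⟨i, hadm⟩ := BNC.Aux.exists_admissible hv hn hM hcas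
    have h1 : sInf L ≤ BNC.S v (i + 1) i := csInf_le hLbdd ⟨i, rfl⟩
    have h2 : BNC.S v (i + 1) i ≤ BNC.bnM v M := by
      simp only [BNC.S]
      exact csInf_le ⟨0, fun y hy => hTnonneg y (hsub i hy)⟩ ⟨M, hadm, rfl⟩
    linarith
  · apply le_csInf hLne
    rintro x ⟨i, rfl⟩
    simp only [BNC.S]
    exact csInf_le_csInf hTbdd (hAdmne i) (hsub i)
end
end

section
/- If τ(i,j) ≤ 2π/3, then every point v_k with k ∈ ⟨i+1..j−1⟩ satisfies ∠ v_i v_k v_j ≥ π/3 (unsigned angle at v_k in the triangle v_i v_k v_j). -/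
noncomputable section

open Real
noncomputable section
namespace S12
abbrev Pt : Type := EuclideanSpace ℝ (Fin 2)
def cross (u w : Pt) : ℝ := u 0 * w 1 - u 1 * w 0
lemma inner_coords (u w : Pt) : (inner ℝ u w : ℝ) = u 0 * w 0 + u 1 * w 1 := by
  simp [PiLp.inner_apply, Fin.sum_univ_two, RCLike.inner_apply]; ring
def mk2 (a b : ℝ) : Pt := (WithLp.equiv 2 (Fin 2 → ℝ)).symm ![a, b]
def rot (θ : ℝ) (u : Pt) : Pt := mk2 (cos θ * u 0 - sin θ * u 1) (sin θ * u 0 + cos θ * u 1)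
@[simp] lemma rot_apply0 (θ : ℝ) (u : Pt) : rot θ u 0 = cos θ * u 0 - sin θ * u 1 := rfl
@[simp] lemma rot_apply1 (θ : ℝ) (u : Pt) : rot θ u 1 = sin θ * u 0 + cos θ * u 1 := rfl
lemma ext2 {u w : Pt} (h0 : u 0 = w 0) (h1 : u 1 = w 1) : u = w := by
  ext i; fin_cases i <;> assumption
lemma norm_sq_coords (x : Pt) : ‖x‖ * ‖x‖ = x 0 * x 0 + x 1 * x 1 := by
  rw [← real_inner_self_eq_norm_mul_norm, inner_coords]
lemma norm_pos_of_ne {x : Pt} (hx : x ≠ 0) : 0 < ‖x‖ := norm_pos_iff.mpr hx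
lemma inner_self_pos' {x : Pt} (hx : x ≠ 0) : 0 < (inner ℝ x x : ℝ) := by
  rw [real_inner_self_eq_norm_mul_norm]; exact mul_pos (norm_pos_of_ne hx) (norm_pos_of_ne hx)
lemma rot_zero (u : Pt) : rot 0 u = u := by apply ext2 <;> simp
lemma rot_rot (a b : ℝ) (u : Pt) : rot a (rot b u) = rot (a + b) u := by
  apply ext2 <;> simp [Real.cos_add, Real.sin_add] <;> ring
lemma rot_smul (a c : ℝ) (u : Pt) : rot a (c • u) = c • rot a u := by
  apply ext2 <;> show _ = c * _ <;> simp [show ∀ x : Pt, (c • x) 0 = c * x 0 from fun _ => rfl,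
    show ∀ x : Pt, (c • x) 1 = c * x 1 from fun _ => rfl] <;> ring
lemma inner_rot_rot (a b : ℝ) (x : Pt) :
    (inner ℝ (rot a x) (rot b x) : ℝ) = cos (b - a) * (inner ℝ x x : ℝ) := by
  simp only [inner_coords, rot_apply0, rot_apply1, Real.cos_sub]
  nlinarith [sin_sq_add_cos_sq a, sin_sq_add_cos_sq b]
lemma cross_rot_rot (a b : ℝ) (x : Pt) :
    cross (rot a x) (rot b x) = sin (b - a) * (inner ℝ x x : ℝ) := by
  simp only [cross, inner_coords, rot_apply0, rot_apply1, Real.sin_sub]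
  nlinarith [sin_sq_add_cos_sq a, sin_sq_add_cos_sq b]
lemma norm_rot (a : ℝ) (x : Pt) : ‖rot a x‖ = ‖x‖ := by
  have h := inner_rot_rot a a x
  simp only [sub_self, Real.cos_zero, one_mul, real_inner_self_eq_norm_mul_norm] at h
  exact (mul_self_inj_of_nonneg (norm_nonneg _) (norm_nonneg _)).mp h
lemma cross_smul_left (c : ℝ) (u w : Pt) : cross (c • u) w = c * cross u w := by
  show c * u 0 * w 1 - c * u 1 * w 0 = _
  unfold cross; ring
lemma cross_smul_right (c : ℝ) (u w : Pt) : cross u (c • w) = c * cross u w := by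
  show u 0 * (c * w 1) - u 1 * (c * w 0) = _
  unfold cross; ring
lemma cross_add_left (u u' w : Pt) : cross (u + u') w = cross u w + cross u' w := by
  show (u 0 + u' 0) * w 1 - (u 1 + u' 1) * w 0 = _
  unfold cross; ring
lemma cross_add_right (u w w' : Pt) : cross u (w + w') = cross u w + cross u w' := by
  show u 0 * (w 1 + w' 1) - u 1 * (w 0 + w' 0) = _
  unfold cross; ring
lemma cross_zero_right (u : Pt) : cross u 0 = 0 := by
  show u 0 * 0 - u 1 * 0 = 0; ring
lemma norm_smul_rot {c : ℝ} (hc : 0 < c) (φ : ℝ) (x : Pt) : ‖c • rot φ x‖ = c * ‖x‖ := by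
  rw [norm_smul, norm_rot, Real.norm_eq_abs, abs_of_pos hc]

lemma exists_rot (x y : Pt) (hx : x ≠ 0) (hy : y ≠ 0) :
    ∃ φ ∈ Set.Ioc (-π) π, ∃ c : ℝ, 0 < c ∧ y = c • rot φ x := by
  have hxp := norm_pos_of_ne hx
  have hyp := norm_pos_of_ne hy
  set ip : ℝ := (inner ℝ x y : ℝ) with hip
  set cr : ℝ := cross x y with hcr
  have hlag : ip * ip + cr * cr = (‖x‖ * ‖y‖) * (‖x‖ * ‖y‖) := by
    have h1 := norm_sq_coords x
    have h2 := norm_sq_coords y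
    rw [hip, hcr, inner_coords]
    unfold cross
    nlinarith [h1, h2]
  set z : ℂ := ⟨ip, cr⟩ with hz
  have habs : ‖z‖ = ‖x‖ * ‖y‖ := by
    rw [Complex.norm_def, Complex.normSq_apply]
    show Real.sqrt (ip * ip + cr * cr) = _
    rw [hlag]
    exact Real.sqrt_mul_self (by positivity)
  have hz0 : z ≠ 0 := by
    intro h
    rw [h] at habs
    simp at habs
    tauto
  refine ⟨z.arg, ⟨Complex.neg_pi_lt_arg z, Complex.arg_le_pi z⟩, ‖y‖ / ‖x‖,
    div_pos hyp hxp, ?_⟩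
  have hcos : Real.cos z.arg = ip / (‖x‖ * ‖y‖) := by rw [Complex.cos_arg hz0, habs]
  have hsin : Real.sin z.arg = cr / (‖x‖ * ‖y‖) := by rw [Complex.sin_arg, habs]
  apply ext2
  · show y 0 = (‖y‖ / ‖x‖) * (Real.cos z.arg * x 0 - Real.sin z.arg * x 1)
    rw [hcos, hsin]
    have key : (‖x‖ * ‖x‖) * y 0 = ip * x 0 - cr * x 1 := by
      rw [norm_sq_coords, hip, hcr, inner_coords]; unfold cross; ring
    field_simp
    linear_combination key
  · show y 1 = (‖y‖ / ‖x‖) * (Real.sin z.arg * x 0 + Real.cos z.arg * x 1)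
    rw [hcos, hsin]
    have key : (‖x‖ * ‖x‖) * y 1 = cr * x 0 + ip * x 1 := by
      rw [norm_sq_coords, hip, hcr, inner_coords]; unfold cross; ring
    field_simp
    linear_combination key

lemma cross_left_rot (φ c : ℝ) (x : Pt) :
    cross x (c • rot φ x) = c * (sin φ * (inner ℝ x x : ℝ)) := by
  rw [cross_smul_right]
  have h := cross_rot_rot 0 φ x
  rw [rot_zero] at h
  rw [h, sub_zero]
lemma cross_rot_right (φ τ c : ℝ) (x : Pt) :
    cross (c • rot φ x) (rot τ x) = c * (sin (τ - φ) * (inner ℝ x x : ℝ)) := by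
  rw [cross_smul_left, cross_rot_rot]
lemma inner_left_rot (φ c : ℝ) (x : Pt) :
    (inner ℝ x (c • rot φ x) : ℝ) = c * (cos φ * (inner ℝ x x : ℝ)) := by
  rw [real_inner_smul_right]
  have h := inner_rot_rot 0 φ x
  rw [rot_zero] at h
  rw [h, sub_zero]

lemma rep_phi_mem (x u : Pt) (hx : x ≠ 0) (hu : u ≠ 0) (τ : ℝ) (hτ0 : 0 < τ) (hτπ : τ < π)
    (h1 : 0 ≤ cross x u) (h2 : 0 ≤ cross u (rot τ x)) :
    ∃ φ c : ℝ, 0 ≤ φ ∧ φ ≤ τ ∧ 0 < c ∧ u = c • rot φ x := by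
  obtain ⟨φ, hφmem, c, hc, hrep⟩ := exists_rot x u hx hu
  have hN : 0 < (inner ℝ x x : ℝ) := inner_self_pos' hx
  have hcN : 0 < c * (inner ℝ x x : ℝ) := mul_pos hc hN
  have hsinφ : 0 ≤ sin φ := by
    rw [hrep, cross_left_rot] at h1
    nlinarith
  have hφ0 : 0 ≤ φ := by
    by_contra h
    push_neg at h
    have := Real.sin_neg_of_neg_of_neg_pi_lt h hφmem.1
    linarith
  have hsinτφ : 0 ≤ sin (τ - φ) := by
    rw [hrep, cross_rot_right] at h2
    nlinarith
  have hφτ : φ ≤ τ := by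
    by_contra h
    push_neg at h
    have hlt : τ - φ < 0 := by linarith
    have hgt : -π < τ - φ := by linarith [hφmem.2]
    have := Real.sin_neg_of_neg_of_neg_pi_lt hlt hgt
    linarith
  exact ⟨φ, c, hφ0, hφτ, hc, hrep⟩

lemma inner_ge_of_cone (x : Pt) (hx : x ≠ 0) (τ : ℝ) (hτ0 : 0 < τ) (hτπ : τ < π)
    (u w : Pt) (hu : u ≠ 0) (hw : w ≠ 0)
    (hu1 : 0 ≤ cross x u) (hu2 : 0 ≤ cross u (rot τ x))
    (hw1 : 0 ≤ cross x w) (hw2 : 0 ≤ cross w (rot τ x)) :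
    Real.cos τ * (‖u‖ * ‖w‖) ≤ (inner ℝ u w : ℝ) := by
  obtain ⟨φ, c, hφ0, hφτ, hc, hφ⟩ := rep_phi_mem x u hx hu τ hτ0 hτπ hu1 hu2
  obtain ⟨ψ, c', hψ0, hψτ, hc', hψ⟩ := rep_phi_mem x w hx hw τ hτ0 hτπ hw1 hw2
  have hN : 0 < (inner ℝ x x : ℝ) := inner_self_pos' hx
  have hiuw : (inner ℝ u w : ℝ) = c * (c' * (cos (ψ - φ) * (inner ℝ x x : ℝ))) := by
    rw [hφ, hψ, real_inner_smul_left, real_inner_smul_right, inner_rot_rot]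
  have hnu : ‖u‖ = c * ‖x‖ := by rw [hφ, norm_smul_rot hc]
  have hnw : ‖w‖ = c' * ‖x‖ := by rw [hψ, norm_smul_rot hc']
  have hcos : cos τ ≤ cos (ψ - φ) := by
    rw [← Real.cos_abs (ψ - φ)]
    apply Real.cos_le_cos_of_nonneg_of_le_pi (abs_nonneg _) (by linarith)
    rw [abs_sub_le_iff]
    constructor <;> linarith
  have hxx : (inner ℝ x x : ℝ) = ‖x‖ * ‖x‖ := real_inner_self_eq_norm_mul_norm x
  rw [hiuw, hnu, hnw, hxx]
  have hxp := norm_pos_of_ne hx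
  have hF : (0:ℝ) < c * c' * (‖x‖ * ‖x‖) := mul_pos (mul_pos hc hc') (mul_pos hxp hxp)
  nlinarith [mul_le_mul_of_nonneg_left hcos hF.le]

lemma eq_smul_rot_angle (x y : Pt) (hx : x ≠ 0) (hy : y ≠ 0) (hxy : 0 < cross x y) :
    ∃ c : ℝ, 0 < c ∧ y = c • rot (InnerProductGeometry.angle x y) x := by
  obtain ⟨φ, hφmem, c, hc, hrep⟩ := exists_rot x y hx hy
  have hN : 0 < (inner ℝ x x : ℝ) := inner_self_pos' hx
  have hcN : 0 < c * (inner ℝ x x : ℝ) := mul_pos hc hN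
  have hsinφ : 0 < sin φ := by
    rw [hrep, cross_left_rot] at hxy
    nlinarith
  have hφ0 : 0 ≤ φ := by
    by_contra h
    push_neg at h
    have := Real.sin_neg_of_neg_of_neg_pi_lt h hφmem.1
    linarith
  have hny : ‖y‖ = c * ‖x‖ := by rw [hrep, norm_smul_rot hc]
  have hcosang : Real.cos (InnerProductGeometry.angle x y) = Real.cos φ := by
    rw [InnerProductGeometry.cos_angle, hny]
    nth_rewrite 1 [hrep]
    rw [inner_left_rot, real_inner_self_eq_norm_mul_norm]
    have hxp := norm_pos_of_ne hx
    field_simp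
  have hang : InnerProductGeometry.angle x y = φ :=
    Real.injOn_cos ⟨InnerProductGeometry.angle_nonneg x y, InnerProductGeometry.angle_le_pi x y⟩
      ⟨hφ0, hφmem.2⟩ hcosang
  rw [hang]
  exact ⟨c, hc, hrep⟩

end S12

/-- If `τ(i,j) ≤ 2π/3` then every point `v k` with `k ∈ ⟨i+1..j−1⟩` satisfies
`∠ v i, v k, v j ≥ π/3`. -/
theorem stmt12 (n : ℕ) [NeZero n] (hn : 4 ≤ n) (hEven : Even n)
    (v : ZMod n → BNC.Pt) (hv : BNC.ConvexCCW v)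
    (i j : ZMod n) (htau : BNC.tau v i j ≤ 2 * Real.pi / 3) :
    ∀ k ∈ BNC.arc (i + 1) (j - 1),
      Real.pi / 3 ≤ EuclideanGeometry.angle (v i) (v k) (v j) := by
  intro k hk
  have hπ := Real.pi_pos
  haveI : Fact (1 < n) := ⟨by omega⟩
  have h1n : (1 : ZMod n) ≠ 0 := one_ne_zero
  have h2n : (2 : ZMod n) ≠ 0 := by
    intro h
    have h1 : ((2 : ℕ) : ZMod n).val = 2 := ZMod.val_cast_of_lt (by omega)
    rw [show ((2:ℕ) : ZMod n) = (2 : ZMod n) by push_cast; ring, h, ZMod.val_zero] at h1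
    omega
  set d : ZMod n → BNC.Pt := fun s => v (s + 1) - v s with hd_def
  have hdcross : ∀ s : ZMod n, 0 < S12.cross (d s) (d (s + 1)) := by
    intro s
    have h := hv s (s + 2) (by intro h; exact h2n (by linear_combination h))
      (by intro h; exact h1n (by linear_combination h))
    have hsum : v (s + 2) - v s = d (s + 1) + d s := by
      have e1 : s + 1 + 1 = s + 2 := by ring
      simp only [hd_def, e1]
      abel
    have h' : (0:ℝ) < S12.cross (d s) (v (s + 2) - v s) := h
    rw [hsum, S12.cross_add_right] at h'
    have hself : S12.cross (d s) (d s) = 0 := by unfold S12.cross; ring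
    linarith
  have hdne : ∀ s : ZMod n, d s ≠ 0 := by
    intro s h
    have h2 := hdcross s
    rw [h] at h2
    have : S12.cross (0 : BNC.Pt) (d (s+1)) = 0 := by unfold S12.cross; simp
    linarith [this ▸ h2]
  set m : ℕ := (j - 1 - (i + 1)).val with hm_def
  have hmlt : m < n := ZMod.val_lt _
  set α : ℕ → ℝ := fun t =>
    InnerProductGeometry.angle (d (i + (t : ZMod n) + 1)) (d (i + (t : ZMod n))) with hα_def
  have hinj : ∀ a ∈ Finset.range (m+1), ∀ b ∈ Finset.range (m+1),
      (fun t : ℕ => i + 1 + (t : ZMod n)) a = (fun t : ℕ => i + 1 + (t : ZMod n)) b → a = b := by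
    intro a ha b hb hab
    simp only at hab
    have h1 : (a : ZMod n) = b := by linear_combination hab
    have ha' : a < n := by have := Finset.mem_range.mp ha; omega
    have hb' : b < n := by have := Finset.mem_range.mp hb; omega
    have := congrArg ZMod.val h1
    rwa [ZMod.val_cast_of_lt ha', ZMod.val_cast_of_lt hb'] at this
  have htau_eq : BNC.tau v i j = ∑ t ∈ Finset.range (m+1), α t := by
    unfold BNC.tau BNC.arc
    rw [Finset.sum_image hinj]
    apply Finset.sum_congr rfl
    intro t _
    have e1 : i + 1 + (t : ZMod n) = i + (t : ZMod n) + 1 := by ring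
    have e2 : i + (t : ZMod n) + 1 - 1 = i + (t : ZMod n) := by ring
    rw [e1, e2]
  set γ : ℕ → ℝ := fun t => ∑ r ∈ Finset.range t, α r with hγ_def
  set τ' : ℝ := γ (m+1) with hτ'_def
  have hαnonneg : ∀ t, 0 ≤ α t := fun t => InnerProductGeometry.angle_nonneg _ _
  have hαpos : ∀ t : ℕ, 0 < α t := by
    intro t
    have hcr := hdcross (i + (t : ZMod n))
    obtain ⟨c, hc, hrep⟩ := S12.eq_smul_rot_angle _ _ (hdne _) (hdne _) hcr
    have hN := S12.inner_self_pos' (hdne (i + (t : ZMod n)))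
    have hcN : 0 < c * (inner ℝ (d (i + (t:ZMod n))) (d (i + (t:ZMod n))) : ℝ) := mul_pos hc hN
    have hsin : 0 < Real.sin (InnerProductGeometry.angle (d (i + (t:ZMod n))) (d (i + (t:ZMod n) + 1))) := by
      rw [hrep, S12.cross_left_rot] at hcr
      nlinarith
    have hang0 : 0 ≤ InnerProductGeometry.angle (d (i + (t:ZMod n))) (d (i + (t:ZMod n) + 1)) :=
      InnerProductGeometry.angle_nonneg _ _
    have : 0 < InnerProductGeometry.angle (d (i + (t:ZMod n))) (d (i + (t:ZMod n) + 1)) := by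
      rcases eq_or_lt_of_le hang0 with h | h
      · rw [← h] at hsin; simp at hsin
      · exact h
    have hαt : α t = InnerProductGeometry.angle (d (i + (t:ZMod n))) (d (i + (t:ZMod n) + 1)) := by
      rw [hα_def]; exact InnerProductGeometry.angle_comm _ _
    rw [hαt]
    exact this
  have hγmono : ∀ s t : ℕ, s ≤ t → γ s ≤ γ t := by
    intro s t hst
    apply Finset.sum_le_sum_of_subset_of_nonneg (Finset.range_subset_range.mpr hst)
    intro r _ _; exact hαnonneg r
  have hγnonneg : ∀ t, 0 ≤ γ t := by
    intro t; exact Finset.sum_nonneg fun r _ => hαnonneg r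
  have hτ'pos : 0 < τ' := by
    rw [hτ'_def, hγ_def]
    apply Finset.sum_pos (fun r _ => hαpos r) (by simp)
  have hτ'le : τ' ≤ 2 * π / 3 := by
    rw [hτ'_def, hγ_def]; rw [htau_eq] at htau; exact htau
  have hτ'π : τ' < π := by linarith
  set x : BNC.Pt := d i with hx_def
  have hx : x ≠ 0 := hdne i
  -- Claim A
  have claimA : ∀ t : ℕ, t ≤ m + 1 → ∃ c : ℝ, 0 < c ∧ d (i + (t : ZMod n)) = c • S12.rot (γ t) x := by
    intro t
    induction t with
    | zero =>
      intro _
      refine ⟨1, one_pos, ?_⟩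
      have hγ0 : γ 0 = 0 := by simp [hγ_def]
      have e0 : i + ((0:ℕ) : ZMod n) = i := by push_cast; ring
      rw [hγ0, S12.rot_zero, one_smul, e0, hx_def]
    | succ t ih =>
      intro ht
      obtain ⟨c, hc, hrep⟩ := ih (by omega)
      have hcr := hdcross (i + (t : ZMod n))
      obtain ⟨c', hc', hrep'⟩ := S12.eq_smul_rot_angle _ _ (hdne _) (hdne _) hcr
      have hαeq : InnerProductGeometry.angle (d (i + (t:ZMod n))) (d (i + (t:ZMod n) + 1)) = α t := by
        rw [hα_def]; exact InnerProductGeometry.angle_comm _ _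
      rw [hαeq] at hrep'
      have ecast : (((t+1:ℕ)) : ZMod n) = (t : ZMod n) + 1 := by push_cast; ring
      have eidx : i + (((t+1:ℕ)) : ZMod n) = i + (t : ZMod n) + 1 := by rw [ecast]; ring
      refine ⟨c' * c, mul_pos hc' hc, ?_⟩
      have hγsucc : γ (t+1) = α t + γ t := by
        simp only [hγ_def]
        rw [Finset.sum_range_succ]
        ring
      rw [eidx, hrep', hrep, S12.rot_smul, S12.rot_rot, smul_smul, hγsucc]
  -- cone predicate
  set P : BNC.Pt → Prop := fun y => 0 ≤ S12.cross x y ∧ 0 ≤ S12.cross y (S12.rot τ' x) with hP_def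
  have hPadd : ∀ y z, P y → P z → P (y + z) := by
    intro y z hy hz
    exact ⟨by rw [S12.cross_add_right]; linarith [hy.1, hz.1],
           by rw [S12.cross_add_left]; linarith [hy.2, hz.2]⟩
  have hP0 : P 0 := by
    constructor
    · rw [S12.cross_zero_right]
    · show (0:ℝ) ≤ S12.cross 0 _
      have : S12.cross (0 : BNC.Pt) (S12.rot τ' x) = 0 := by unfold S12.cross; simp
      rw [this]
  have hN := S12.inner_self_pos' hx
  have hPd : ∀ t : ℕ, t ≤ m + 1 → P (d (i + (t : ZMod n))) := by
    intro t ht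
    obtain ⟨c, hc, hrep⟩ := claimA t ht
    have hγt0 : 0 ≤ γ t := hγnonneg t
    have hγtτ : γ t ≤ τ' := hγmono t (m+1) ht
    constructor
    · rw [hrep, S12.cross_left_rot]
      have : 0 ≤ Real.sin (γ t) := Real.sin_nonneg_of_nonneg_of_le_pi hγt0 (by linarith)
      positivity
    · rw [hrep, S12.cross_rot_right]
      have : 0 ≤ Real.sin (τ' - γ t) := Real.sin_nonneg_of_nonneg_of_le_pi (by linarith) (by linarith)
      positivity
  -- telescoping
  have htel : ∀ r : ℕ, v (i + (r : ZMod n)) - v i = ∑ t ∈ Finset.range r, d (i + (t : ZMod n)) := by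
    intro r
    induction r with
    | zero => simp
    | succ r ih =>
      rw [Finset.sum_range_succ, ← ih]
      have eidx : i + (((r+1:ℕ)) : ZMod n) = (i + (r : ZMod n)) + 1 := by push_cast; ring
      rw [eidx]
      simp only [hd_def]
      abel
  -- extract k
  obtain ⟨s, hs, hk_eq⟩ := Finset.mem_image.mp hk
  have hs' : s < m + 1 := Finset.mem_range.mp hs
  have hk_idx : k = i + ((s+1 : ℕ) : ZMod n) := by
    rw [← hk_eq]; push_cast; ring
  have hj_idx : j = i + ((m+2 : ℕ) : ZMod n) := by
    have hmval : ((m : ℕ) : ZMod n) = j - 1 - (i + 1) := ZMod.natCast_rightInverse _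
    push_cast
    rw [hmval]; ring
  set u : BNC.Pt := v k - v i with hu_def
  set w : BNC.Pt := v j - v k with hw_def
  have hu_sum : u = ∑ t ∈ Finset.range (s+1), d (i + (t : ZMod n)) := by
    rw [hu_def, hk_idx]; exact htel (s+1)
  have hw_sum : w = ∑ t ∈ Finset.Ico (s+1) (m+2), d (i + (t : ZMod n)) := by
    rw [Finset.sum_Ico_eq_sub _ (by omega : s + 1 ≤ m + 2)]
    rw [← htel (s+1), ← htel (m+2)]
    rw [hw_def, hk_idx, hj_idx]
    abel
  have hPu : P u := by
    rw [hu_sum]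
    apply Finset.sum_induction _ P hPadd hP0
    intro t ht
    exact hPd t (by have := Finset.mem_range.mp ht; omega)
  have hPw : P w := by
    rw [hw_sum]
    apply Finset.sum_induction _ P hPadd hP0
    intro t ht
    exact hPd t (by have := (Finset.mem_Ico.mp ht).2; omega)
  -- final angle computation
  have hang_eq : EuclideanGeometry.angle (v i) (v k) (v j)
      = InnerProductGeometry.angle (-u) w := by
    have : v i - v k = -u := by rw [hu_def]; abel
    rw [EuclideanGeometry.angle, vsub_eq_sub, vsub_eq_sub, this, hw_def]
  rw [hang_eq]
  by_cases hu0 : u = 0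
  · rw [hu0, neg_zero, InnerProductGeometry.angle_zero_left]
    linarith
  by_cases hw0 : w = 0
  · rw [hw0, InnerProductGeometry.angle_zero_right]
    linarith
  have hinner := S12.inner_ge_of_cone x hx τ' hτ'pos hτ'π u w hu0 hw0 hPu.1 hPu.2 hPw.1 hPw.2
  have hnu := S12.norm_pos_of_ne hu0
  have hnw := S12.norm_pos_of_ne hw0
  have hcos : Real.cos τ' ≤ Real.cos (InnerProductGeometry.angle u w) := by
    rw [InnerProductGeometry.cos_angle]
    rw [le_div_iff₀ (by positivity)]
    exact hinner
  have hangle_le : InnerProductGeometry.angle u w ≤ τ' := by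
    by_contra h
    push_neg at h
    have := Real.cos_lt_cos_of_nonneg_of_le_pi hτ'pos.le
      (InnerProductGeometry.angle_le_pi u w) h
    linarith
  rw [InnerProductGeometry.angle_neg_left]
  linarith
end
end
end
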